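/- arXiv:1301.3035 — 4 statements merged into one kernel-verified Lean document; each statement's English description precedes it below -/
import Mathlib

section
/- Fix natural numbers k ≥ 1 and n ≥ 1. Let S be the set of pairs (g, h) where g : Fin n → Fin k, h : Fin (k-1) → Fin n, and, denoting by h↑ : Fin (k-1) → Fin n the weakly increasing rearrangement of h (h↑ = h ∘ Tuple.sort h), for every i : Fin (k-1) one has (h↑ i : ℕ) < card { m : Fin n | (g m : ℕ) ≤ (i : ℕ) }. Then |S| = k^(n-1) · n^(k-1). -/
open Finset Polynomial

/-- Alternating sums of binomial coefficients times values of a polynomial of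
degree `< m` vanish. -/
lemma altsum_choose_eval (m : ℕ) (p : Polynomial ℤ) (hp : p.natDegree < m) :
    ∑ i ∈ range (m + 1), (-1 : ℤ) ^ i * (m.choose i : ℤ) * p.eval (i : ℤ) = 0 := by
  induction m generalizing p with
  | zero => omega
  | succ m ih =>
    set q : Polynomial ℤ := p.comp (X + 1) - p with hq
    have hqeval : ∀ i : ℤ, q.eval i = p.eval (i + 1) - p.eval i := by
      intro i; simp [hq, eval_comp]
    have hqd : q = 0 ∨ q.natDegree < m := by
      by_cases hq0 : q = 0
      · exact Or.inl hq0
      right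
      by_cases h0 : p.natDegree = 0
      · exfalso
        obtain ⟨c, rfl⟩ := Polynomial.natDegree_eq_zero.mp h0
        exact hq0 (by simp [hq])
      · have hx1 : (X + 1 : Polynomial ℤ).natDegree = 1 := by
          simpa using Polynomial.natDegree_X_add_C (1 : ℤ)
        have hlc : (p.comp (X + 1)).leadingCoeff = p.leadingCoeff := by
          rw [Polynomial.leadingCoeff_comp (by rw [hx1]; omega)]
          have h1 : (X + 1 : Polynomial ℤ).leadingCoeff = 1 := by
            simpa using (Polynomial.monic_X_add_C (1 : ℤ)).leadingCoeff
          simp [h1]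
        have hp0 : p ≠ 0 := fun h => h0 (by simp [h])
        have hcomp0 : p.comp (X + 1) ≠ 0 := by
          intro h
          have := hlc
          rw [h] at this
          exact hp0 (Polynomial.leadingCoeff_eq_zero.mp this.symm)
        have hdeg : (p.comp (X + 1)).degree = p.degree := by
          rw [Polynomial.degree_eq_natDegree hcomp0, Polynomial.degree_eq_natDegree hp0]
          norm_cast
          rw [Polynomial.natDegree_comp, hx1, mul_one]
        have hlt : q.degree < p.degree := by
          have := Polynomial.degree_sub_lt hdeg hcomp0 hlc
          rwa [hdeg] at this
        have : q.natDegree < p.natDegree := Polynomial.natDegree_lt_natDegree hq0 hlt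
        omega
    have hg0 : (-1 : ℤ) ^ (0:ℕ) * (m.choose 0 : ℤ) * p.eval ((0:ℕ) : ℤ) = p.eval 0 := by simp
    have hSh : ∑ i ∈ range (m + 1), (-1 : ℤ) ^ i * (m.choose (i+1) : ℤ) * p.eval ((i : ℤ) + 1)
        = p.eval 0 - ∑ i ∈ range (m + 1), (-1 : ℤ) ^ i * (m.choose i : ℤ) * p.eval (i : ℤ) := by
      have e1 := Finset.sum_range_succ' (fun i => (-1 : ℤ) ^ i * (m.choose i : ℤ) * p.eval (i : ℤ)) m
      have e2 : ∑ i ∈ range m, (-1 : ℤ) ^ (i+1) * (m.choose (i+1) : ℤ) * p.eval ((i+1 : ℕ) : ℤ)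
          = ∑ i ∈ range m, -((-1 : ℤ) ^ i * (m.choose (i+1) : ℤ) * p.eval ((i : ℤ) + 1)) := by
        apply Finset.sum_congr rfl
        intro i _
        push_cast
        ring
      have e3 : ∑ i ∈ range (m+1), (-1 : ℤ) ^ i * (m.choose (i+1) : ℤ) * p.eval ((i : ℤ) + 1)
          = ∑ i ∈ range m, (-1 : ℤ) ^ i * (m.choose (i+1) : ℤ) * p.eval ((i : ℤ) + 1) := by
        rw [Finset.sum_range_succ]
        simp [Nat.choose_succ_self]
      rw [e3, e1, e2, Finset.sum_neg_distrib, hg0] at *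
      linarith [e1]
    have key : ∑ i ∈ range (m + 1 + 1), (-1 : ℤ) ^ i * ((m + 1).choose i : ℤ) * p.eval (i : ℤ)
        = ∑ i ∈ range (m + 1), (-1 : ℤ) ^ i * (m.choose i : ℤ) * p.eval (i : ℤ)
          - ∑ i ∈ range (m + 1), (-1 : ℤ) ^ i * (m.choose i : ℤ) * p.eval ((i : ℤ) + 1) := by
      rw [Finset.sum_range_succ' _ (m + 1)]
      have hsplit : ∑ i ∈ range (m + 1),
            (-1 : ℤ) ^ (i + 1) * ((m + 1).choose (i + 1) : ℤ) * p.eval ((i + 1 : ℕ) : ℤ)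
          = ∑ i ∈ range (m + 1),
              (-((-1 : ℤ) ^ i * (m.choose i : ℤ) * p.eval ((i : ℤ) + 1))
                + -((-1 : ℤ) ^ i * (m.choose (i+1) : ℤ) * p.eval ((i : ℤ) + 1))) := by
        apply Finset.sum_congr rfl
        intro i _
        have hc : ((m + 1).choose (i + 1) : ℤ) = (m.choose i : ℤ) + (m.choose (i + 1) : ℤ) := by
          exact_mod_cast congrArg (Nat.cast : ℕ → ℤ) (Nat.choose_succ_succ m i)
        rw [hc]
        push_cast
        ring
      rw [hsplit, Finset.sum_add_distrib, Finset.sum_neg_distrib, Finset.sum_neg_distrib, hSh]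
      have : (-1 : ℤ) ^ (0:ℕ) * (((m+1).choose 0 : ℕ) : ℤ) * p.eval ((0:ℕ) : ℤ) = p.eval 0 := by
        simp
      rw [this]
      ring
    have last : ∑ i ∈ range (m + 1), (-1 : ℤ) ^ i * (m.choose i : ℤ) * q.eval (i : ℤ)
        = ∑ i ∈ range (m + 1), (-1 : ℤ) ^ i * (m.choose i : ℤ) * p.eval ((i : ℤ) + 1)
          - ∑ i ∈ range (m + 1), (-1 : ℤ) ^ i * (m.choose i : ℤ) * p.eval (i : ℤ) := by
      rw [← Finset.sum_sub_distrib]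
      apply Finset.sum_congr rfl
      intro i _
      rw [hqeval]
      ring
    have hq0 : ∑ i ∈ range (m + 1), (-1 : ℤ) ^ i * (m.choose i : ℤ) * q.eval (i : ℤ) = 0 := by
      rcases hqd with h' | h'
      · simp [h']
      · exact ih q h'
    rw [key]
    rw [last] at hq0
    linarith


section
variable (n m : ℕ) (x y z : ℤ)

def Az (x : ℤ) (t i : ℕ) : ℤ :=
  if t = 0 then (if i = 0 then 1 else 0) else x * (x + (i : ℤ)) ^ (t - 1) * (t : ℤ) ^ i

def Hs (n m : ℕ) (x y z : ℤ) : ℤ :=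
  ∑ t ∈ range (n + 1), ∑ i ∈ range (m + 1),
    (n.choose t : ℤ) * (m.choose i : ℤ) * Az x t i *
      (y + (m : ℤ) - (i : ℤ)) ^ (n - t) * (z + (n : ℤ) - (t : ℤ)) ^ (m - i)

lemma choose_sub_comm (n t j : ℕ) :
    n.choose t * (n - t).choose j = n.choose j * (n - j).choose t := by
  rcases le_or_gt (t + j) n with h | h
  · have h1 := Nat.choose_mul (n := n) (show t ≤ t + j by omega)
    have h2 := Nat.choose_mul (n := n) (show j ≤ t + j by omega)
    rw [Nat.add_sub_cancel_left] at h1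
    rw [Nat.add_sub_cancel] at h2
    have h3 : (t + j).choose t = (t + j).choose j := Nat.choose_symm_add
    rw [← h1, ← h2, h3]
  · rcases le_or_gt t n with ht | ht
    · rcases le_or_gt j n with hj | hj
      · rw [Nat.choose_eq_zero_of_lt (show n - t < j by omega),
          Nat.choose_eq_zero_of_lt (show n - j < t by omega)]
        ring
      · rw [Nat.choose_eq_zero_of_lt (show n - t < j by omega),
          Nat.choose_eq_zero_of_lt (show n < j by omega)]
        ring
    · rw [Nat.choose_eq_zero_of_lt ht, Nat.choose_eq_zero_of_lt (show n - j < t by omega)]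
      ring

/-- Exact Taylor-type expansion of `Hs` in the variable `y`. -/
lemma Hs_y_expand :
    Hs n m x y z = ∑ j ∈ range (n + 1), (n.choose j : ℤ) * y ^ j * Hs (n - j) m x 0 (z + (j:ℤ)) := by
  have common : ∀ j ∈ range (n + 1),
      (n.choose j : ℤ) * y ^ j * Hs (n - j) m x 0 (z + (j:ℤ))
      = ∑ t ∈ range (n + 1), ∑ i ∈ range (m + 1),
          (n.choose j : ℤ) * ((n - j).choose t : ℤ) * (m.choose i : ℤ) * Az x t i * y ^ j *
            ((m:ℤ) - (i:ℤ)) ^ (n - j - t) * (z + (n:ℤ) - (t:ℤ)) ^ (m - i) := by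
    intro j hj
    have hjn : j ≤ n := by
      have := mem_range.mp hj; omega
    rw [Hs, Finset.mul_sum]
    rw [Finset.sum_subset (Finset.range_subset_range.mpr (show n - j + 1 ≤ n + 1 by omega))]
    · apply Finset.sum_congr rfl
      intro t _
      rw [Finset.mul_sum]
      apply Finset.sum_congr rfl
      intro i _
      have hc : ((n - j : ℕ) : ℤ) = (n : ℤ) - (j : ℤ) := by push_cast [hjn]; ring
      rw [hc]
      ring
    · intro t _ hnt
      have h1 : n - j < t := by
        simp only [mem_range] at hnt ⊢
        omega
      simp only [Nat.choose_eq_zero_of_lt h1, Nat.cast_zero, zero_mul, mul_zero,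
        Finset.sum_const_zero]
  rw [Finset.sum_congr rfl common]
  calc Hs n m x y z
      = ∑ t ∈ range (n + 1), ∑ i ∈ range (m + 1), ∑ j ∈ range (n + 1),
          (n.choose t : ℤ) * ((n - t).choose j : ℤ) * (m.choose i : ℤ) * Az x t i * y ^ j *
            ((m:ℤ) - (i:ℤ)) ^ (n - t - j) * (z + (n:ℤ) - (t:ℤ)) ^ (m - i) := by
        rw [Hs]
        apply Finset.sum_congr rfl
        intro t _
        apply Finset.sum_congr rfl
        intro i _
        rw [add_sub_assoc, add_pow, Finset.mul_sum, Finset.sum_mul]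
        rw [Finset.sum_subset (Finset.range_subset_range.mpr (show n - t + 1 ≤ n + 1 by omega))]
        · apply Finset.sum_congr rfl
          intro j _
          ring
        · intro j _ hj
          have h1 : n - t < j := by
            simp only [mem_range] at hj ⊢
            omega
          rw [Nat.choose_eq_zero_of_lt h1]
          push_cast
          ring
    _ = ∑ j ∈ range (n + 1), ∑ t ∈ range (n + 1), ∑ i ∈ range (m + 1),
          (n.choose t : ℤ) * ((n - t).choose j : ℤ) * (m.choose i : ℤ) * Az x t i * y ^ j *
            ((m:ℤ) - (i:ℤ)) ^ (n - t - j) * (z + (n:ℤ) - (t:ℤ)) ^ (m - i) := by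
        rw [Finset.sum_congr rfl (fun t _ => Finset.sum_comm)]
        exact Finset.sum_comm
    _ = ∑ j ∈ range (n + 1), ∑ t ∈ range (n + 1), ∑ i ∈ range (m + 1),
          (n.choose j : ℤ) * ((n - j).choose t : ℤ) * (m.choose i : ℤ) * Az x t i * y ^ j *
            ((m:ℤ) - (i:ℤ)) ^ (n - j - t) * (z + (n:ℤ) - (t:ℤ)) ^ (m - i) := by
        apply Finset.sum_congr rfl
        intro j _
        apply Finset.sum_congr rfl
        intro t _
        apply Finset.sum_congr rfl
        intro i _
        have hcc : (n.choose t : ℤ) * ((n - t).choose j : ℤ)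
            = (n.choose j : ℤ) * ((n - j).choose t : ℤ) := by
          exact_mod_cast congrArg (Nat.cast : ℕ → ℤ) (choose_sub_comm n t j)
        have hee : n - t - j = n - j - t := by omega
        rw [hee]
        calc (n.choose t : ℤ) * ((n - t).choose j : ℤ) * (m.choose i : ℤ) * Az x t i * y ^ j *
              ((m:ℤ) - (i:ℤ)) ^ (n - j - t) * (z + (n:ℤ) - (t:ℤ)) ^ (m - i)
            = (n.choose t : ℤ) * ((n - t).choose j : ℤ) * ((m.choose i : ℤ) * Az x t i * y ^ j *
              ((m:ℤ) - (i:ℤ)) ^ (n - j - t) * (z + (n:ℤ) - (t:ℤ)) ^ (m - i)) := by ring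
          _ = (n.choose j : ℤ) * ((n - j).choose t : ℤ) * ((m.choose i : ℤ) * Az x t i * y ^ j *
              ((m:ℤ) - (i:ℤ)) ^ (n - j - t) * (z + (n:ℤ) - (t:ℤ)) ^ (m - i)) := by rw [hcc]
          _ = _ := by ring


/-- Exact Taylor-type expansion of `Hs` in the variable `z`. -/
lemma Hs_z_expand :
    Hs n m x y z = ∑ j ∈ range (m + 1), (m.choose j : ℤ) * z ^ j * Hs n (m - j) x (y + (j:ℤ)) 0 := by
  have common : ∀ j ∈ range (m + 1),
      (m.choose j : ℤ) * z ^ j * Hs n (m - j) x (y + (j:ℤ)) 0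
      = ∑ t ∈ range (n + 1), ∑ i ∈ range (m + 1),
          (n.choose t : ℤ) * (m.choose j : ℤ) * ((m - j).choose i : ℤ) * Az x t i * z ^ j *
            (y + (m:ℤ) - (i:ℤ)) ^ (n - t) * ((n:ℤ) - (t:ℤ)) ^ (m - j - i) := by
    intro j hj
    have hjm : j ≤ m := by
      have := mem_range.mp hj; omega
    rw [Hs, Finset.mul_sum]
    apply Finset.sum_congr rfl
    intro t _
    rw [Finset.mul_sum]
    rw [Finset.sum_subset (Finset.range_subset_range.mpr (show m - j + 1 ≤ m + 1 by omega))]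
    · apply Finset.sum_congr rfl
      intro i _
      have hc : ((m - j : ℕ) : ℤ) = (m : ℤ) - (j : ℤ) := by push_cast [hjm]; ring
      rw [hc]
      ring
    · intro i _ hi
      have h1 : m - j < i := by
        simp only [mem_range] at hi ⊢
        omega
      rw [Nat.choose_eq_zero_of_lt h1]
      push_cast
      ring
  rw [Finset.sum_congr rfl common]
  calc Hs n m x y z
      = ∑ t ∈ range (n + 1), ∑ i ∈ range (m + 1), ∑ j ∈ range (m + 1),
          (n.choose t : ℤ) * (m.choose i : ℤ) * ((m - i).choose j : ℤ) * Az x t i * z ^ j *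
            (y + (m:ℤ) - (i:ℤ)) ^ (n - t) * ((n:ℤ) - (t:ℤ)) ^ (m - i - j) := by
        rw [Hs]
        apply Finset.sum_congr rfl
        intro t _
        apply Finset.sum_congr rfl
        intro i _
        rw [add_sub_assoc z ((n:ℕ):ℤ) ((t:ℕ):ℤ), add_pow z (((n:ℕ):ℤ) - ((t:ℕ):ℤ)) (m - i),
          Finset.mul_sum]
        rw [Finset.sum_subset (Finset.range_subset_range.mpr (show m - i + 1 ≤ m + 1 by omega))]
        · apply Finset.sum_congr rfl
          intro j _
          ring
        · intro j _ hj
          have h1 : m - i < j := by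
            simp only [mem_range] at hj ⊢
            omega
          rw [Nat.choose_eq_zero_of_lt h1]
          push_cast
          ring
    _ = ∑ j ∈ range (m + 1), ∑ t ∈ range (n + 1), ∑ i ∈ range (m + 1),
          (n.choose t : ℤ) * (m.choose i : ℤ) * ((m - i).choose j : ℤ) * Az x t i * z ^ j *
            (y + (m:ℤ) - (i:ℤ)) ^ (n - t) * ((n:ℤ) - (t:ℤ)) ^ (m - i - j) := by
        rw [Finset.sum_congr rfl (fun t _ => Finset.sum_comm)]
        exact Finset.sum_comm
    _ = ∑ j ∈ range (m + 1), ∑ t ∈ range (n + 1), ∑ i ∈ range (m + 1),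
          (n.choose t : ℤ) * (m.choose j : ℤ) * ((m - j).choose i : ℤ) * Az x t i * z ^ j *
            (y + (m:ℤ) - (i:ℤ)) ^ (n - t) * ((n:ℤ) - (t:ℤ)) ^ (m - j - i) := by
        apply Finset.sum_congr rfl
        intro j _
        apply Finset.sum_congr rfl
        intro t _
        apply Finset.sum_congr rfl
        intro i _
        have hcc : (m.choose i : ℤ) * ((m - i).choose j : ℤ)
            = (m.choose j : ℤ) * ((m - j).choose i : ℤ) := by
          exact_mod_cast congrArg (Nat.cast : ℕ → ℤ) (choose_sub_comm m i j)
        have hee : m - i - j = m - j - i := by omega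
        rw [hee]
        calc (n.choose t : ℤ) * (m.choose i : ℤ) * ((m - i).choose j : ℤ) * Az x t i * z ^ j *
              (y + (m:ℤ) - (i:ℤ)) ^ (n - t) * ((n:ℤ) - (t:ℤ)) ^ (m - j - i)
            = (m.choose i : ℤ) * ((m - i).choose j : ℤ) * ((n.choose t : ℤ) * Az x t i * z ^ j *
              (y + (m:ℤ) - (i:ℤ)) ^ (n - t) * ((n:ℤ) - (t:ℤ)) ^ (m - j - i)) := by ring
          _ = (m.choose j : ℤ) * ((m - j).choose i : ℤ) * ((n.choose t : ℤ) * Az x t i * z ^ j *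
              (y + (m:ℤ) - (i:ℤ)) ^ (n - t) * ((n:ℤ) - (t:ℤ)) ^ (m - j - i)) := by rw [hcc]
          _ = _ := by ring


lemma Az_zero (i : ℕ) : Az x 0 i = if i = 0 then 1 else 0 := rfl

lemma Az_right_zero (t : ℕ) : Az x t 0 = x ^ t := by
  rcases Nat.eq_zero_or_pos t with rfl | ht
  · simp [Az]
  · rw [Az, if_neg (by omega)]
    push_cast
    rw [add_zero, pow_zero, mul_one]
    conv_rhs => rw [show t = (t - 1) + 1 by omega]
    rw [pow_succ]
    ring

lemma Az_pos (t i : ℕ) (ht : 1 ≤ t) : Az x t i = x * (x + (i : ℤ)) ^ (t - 1) * (t : ℤ) ^ i := by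
  rw [Az, if_neg (by omega)]

lemma Hs_n_zero : Hs 0 m x y z = z ^ m := by
  rw [Hs]
  rw [Finset.sum_range_one]
  rw [Finset.sum_eq_single 0]
  · simp [Az]
  · intro i hi hne
    rw [Az_zero, if_neg hne]
    ring
  · intro h
    simp at h

lemma Hs_m_zero : Hs n 0 x y z = (x + y) ^ n := by
  rw [Hs, add_pow]
  apply Finset.sum_congr rfl
  intro t ht
  rw [Finset.sum_range_one, Az_right_zero]
  simp only [Nat.choose_zero_right, Nat.cast_one, Nat.cast_zero]
  ring

lemma neg_one_pow_split (m i : ℕ) (h : i ≤ m) : (-1 : ℤ) ^ (m - i) = (-1) ^ m * (-1) ^ i := by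
  have h1 : (-1 : ℤ) ^ (m - i) * (-1) ^ i = (-1) ^ m := by
    rw [← pow_add]
    congr 1
    omega
  have h2 : (-1 : ℤ) ^ i * (-1) ^ i = 1 := by
    rw [← pow_add, ← two_mul, pow_mul]
    norm_num
  calc (-1 : ℤ) ^ (m - i) = (-1 : ℤ) ^ (m - i) * ((-1) ^ i * (-1) ^ i) := by rw [h2, mul_one]
    _ = ((-1 : ℤ) ^ (m - i) * (-1) ^ i) * (-1) ^ i := by ring
    _ = (-1) ^ m * (-1) ^ i := by rw [h1]

end

open Polynomial in
lemma Hs_anchor1 (n m : ℕ) (x y : ℤ) (hm : 1 ≤ m) (hnm : n ≤ m) :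
    Hs n m x y (-(n : ℤ)) = 0 := by
  rw [Hs]
  apply Finset.sum_eq_zero
  intro t ht
  have htn : t ≤ n := by have := mem_range.mp ht; omega
  rcases Nat.eq_zero_or_pos t with rfl | ht1
  · apply Finset.sum_eq_zero
    intro i _
    rcases Nat.eq_zero_or_pos i with rfl | hi1
    · have : (-(n:ℤ) + (n:ℤ) - ((0:ℕ):ℤ)) = 0 := by push_cast; ring
      rw [this, zero_pow (by omega : m - 0 ≠ 0)]
      ring
    · rw [Az_zero, if_neg (by omega)]
      ring
  · -- t ≥ 1 : use the finite difference lemma in the variable i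
    set p : Polynomial ℤ := (X + C x) ^ (t - 1) * (C (y + (m:ℤ)) - X) ^ (n - t) with hp
    have heval : ∀ i : ℕ, p.eval (i : ℤ) = (x + (i:ℤ)) ^ (t - 1) * (y + (m:ℤ) - (i:ℤ)) ^ (n - t) := by
      intro i
      simp only [hp, eval_mul, eval_pow, eval_add, eval_sub, eval_X, eval_C]
      rw [add_comm (i:ℤ) x]
    have hdeg : p.natDegree < m := by
      have h1 : p.natDegree ≤ (t-1) * 1 + (n-t) * 1 := by
        refine le_trans (Polynomial.natDegree_mul_le) (Nat.add_le_add ?_ ?_)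
        · refine le_trans (Polynomial.natDegree_pow_le) ?_
          have h2 : (X + C x : Polynomial ℤ).natDegree = 1 := Polynomial.natDegree_X_add_C x
          rw [h2]
        · refine le_trans (Polynomial.natDegree_pow_le) ?_
          have h2 : (C (y + (m:ℤ)) - X : Polynomial ℤ).natDegree = 1 := by
            rw [show (C (y + (m:ℤ)) - X : Polynomial ℤ) = -(X - C (y + (m:ℤ))) by ring,
              Polynomial.natDegree_neg, Polynomial.natDegree_X_sub_C]
          rw [h2]
      omega
    have halt := altsum_choose_eval m p hdeg
    calc ∑ i ∈ range (m + 1),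
          (n.choose t : ℤ) * (m.choose i : ℤ) * Az x t i *
            (y + (m : ℤ) - (i : ℤ)) ^ (n - t) * (-(n:ℤ) + (n : ℤ) - (t : ℤ)) ^ (m - i)
        = ∑ i ∈ range (m + 1),
            ((n.choose t : ℤ) * x * (t:ℤ)^m * (-1)^m) *
              ((-1 : ℤ) ^ i * (m.choose i : ℤ) * p.eval (i : ℤ)) := by
          apply Finset.sum_congr rfl
          intro i hi
          have him : i ≤ m := by have := mem_range.mp hi; omega
          rw [heval, Az_pos x t i ht1]
          have hb : (-(n:ℤ) + (n : ℤ) - (t : ℤ)) = -(t:ℤ) := by ring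
          rw [hb, neg_pow, neg_one_pow_split m i him]
          have hpow : (t:ℤ)^i * (t:ℤ)^(m-i) = (t:ℤ)^m := by
            rw [← pow_add]
            congr 1
            omega
          calc (n.choose t : ℤ) * (m.choose i : ℤ) * (x * (x + (i:ℤ))^(t-1) * (t:ℤ)^i) *
                (y + (m : ℤ) - (i : ℤ)) ^ (n - t) * ((-1)^m * (-1)^i * (t:ℤ)^(m-i))
              = ((n.choose t : ℤ) * x * ((t:ℤ)^i * (t:ℤ)^(m-i)) * (-1)^m) *
                ((-1 : ℤ) ^ i * (m.choose i : ℤ) *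
                  ((x + (i:ℤ)) ^ (t - 1) * (y + (m:ℤ) - (i:ℤ)) ^ (n - t))) := by ring
            _ = _ := by rw [hpow]
      _ = ((n.choose t : ℤ) * x * (t:ℤ)^m * (-1)^m) *
            ∑ i ∈ range (m + 1), ((-1 : ℤ) ^ i * (m.choose i : ℤ) * p.eval (i : ℤ)) := by
          rw [Finset.mul_sum]
      _ = 0 := by rw [halt, mul_zero]

open Polynomial in
lemma Hs_anchor2 (n m : ℕ) (x z : ℤ) (hmn : m < n) :
    Hs n m x (-x - (m:ℤ)) z = 0 := by
  rw [Hs, Finset.sum_comm]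
  apply Finset.sum_eq_zero
  intro i hi
  have him : i ≤ m := by have := mem_range.mp hi; omega
  set p : Polynomial ℤ := X ^ i * (C (z + (n:ℤ)) - X) ^ (m - i) with hp
  have heval : ∀ t : ℕ, p.eval (t : ℤ) = (t:ℤ) ^ i * (z + (n:ℤ) - (t:ℤ)) ^ (m - i) := by
    intro t
    simp only [hp, eval_mul, eval_pow, eval_sub, eval_X, eval_C]
  have hdeg : p.natDegree < n := by
    have h1 : p.natDegree ≤ i * 1 + (m-i) * 1 := by
      refine le_trans (Polynomial.natDegree_mul_le) (Nat.add_le_add ?_ ?_)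
      · refine le_trans (Polynomial.natDegree_pow_le) ?_
        have h2 : (X : Polynomial ℤ).natDegree = 1 := Polynomial.natDegree_X
        rw [h2]
      · refine le_trans (Polynomial.natDegree_pow_le) ?_
        have h2 : (C (z + (n:ℤ)) - X : Polynomial ℤ).natDegree = 1 := by
          rw [show (C (z + (n:ℤ)) - X : Polynomial ℤ) = -(X - C (z + (n:ℤ))) by ring,
            Polynomial.natDegree_neg, Polynomial.natDegree_X_sub_C]
        rw [h2]
    omega
  have halt := altsum_choose_eval n p hdeg
  have hn1 : 1 ≤ n := by omega
  calc ∑ t ∈ range (n + 1),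
        (n.choose t : ℤ) * (m.choose i : ℤ) * Az x t i *
          ((-x - (m:ℤ)) + (m : ℤ) - (i : ℤ)) ^ (n - t) * (z + (n : ℤ) - (t : ℤ)) ^ (m - i)
      = ∑ t ∈ range (n + 1),
          ((m.choose i : ℤ) * x * (x + (i:ℤ))^(n-1) * (-1)^n) *
            ((-1 : ℤ) ^ t * (n.choose t : ℤ) * p.eval (t : ℤ)) := by
        apply Finset.sum_congr rfl
        intro t ht
        have htn : t ≤ n := by have := mem_range.mp ht; omega
        have hb : ((-x - (m:ℤ)) + (m : ℤ) - (i : ℤ)) = -(x + (i:ℤ)) := by ring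
        rw [hb, heval, neg_pow, neg_one_pow_split n t htn]
        rcases Nat.eq_zero_or_pos t with rfl | ht1
        · -- t = 0 : both sides are the special term
          rw [Az_zero]
          rcases Nat.eq_zero_or_pos i with rfl | hi1
          · rw [if_pos rfl]
            have hxn : x ^ n = x * x ^ (n - 1) := by
              conv_lhs => rw [show n = (n - 1) + 1 by omega]
              rw [pow_succ]
              ring
            simp only [Nat.sub_zero, Nat.cast_zero, add_zero, sub_zero, pow_zero, one_mul,
              mul_one]
            rw [hxn]
            ring
          · rw [if_neg (by omega)]
            push_cast
            rw [zero_pow (by omega : i ≠ 0)]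
            ring
        · rw [Az_pos x t i ht1]
          have hpow : (x + (i:ℤ))^(t-1) * (x + (i:ℤ))^(n-t) = (x + (i:ℤ))^(n-1) := by
            rw [← pow_add]
            congr 1
            omega
          calc (n.choose t : ℤ) * (m.choose i : ℤ) * (x * (x + (i:ℤ))^(t-1) * (t:ℤ)^i) *
                ((-1)^n * (-1)^t * (x + (i:ℤ))^(n-t)) * (z + (n:ℤ) - (t:ℤ))^(m-i)
              = ((m.choose i : ℤ) * x * ((x + (i:ℤ))^(t-1) * (x + (i:ℤ))^(n-t)) * (-1)^n) *
                ((-1 : ℤ) ^ t * (n.choose t : ℤ) *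
                  ((t:ℤ)^i * (z + (n:ℤ) - (t:ℤ))^(m-i))) := by ring
            _ = _ := by rw [hpow]
    _ = ((m.choose i : ℤ) * x * (x + (i:ℤ))^(n-1) * (-1)^n) *
          ∑ t ∈ range (n + 1), ((-1 : ℤ) ^ t * (n.choose t : ℤ) * p.eval (t : ℤ)) := by
        rw [Finset.mul_sum]
    _ = 0 := by rw [halt, mul_zero]

theorem Hs_eq (n : ℕ) : ∀ (m : ℕ) (x y z : ℤ),
    Hs n m x y z = (x + y + (m:ℤ)) ^ n * (z + (n:ℤ)) ^ m := by
  induction n using Nat.strong_induction_on with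
  | _ n ihn =>
  intro m
  induction m using Nat.strong_induction_on with
  | _ m ihm =>
  intro x y z
  rcases Nat.eq_zero_or_pos n with rfl | hn
  · rw [Hs_n_zero]
    push_cast
    ring
  rcases Nat.eq_zero_or_pos m with rfl | hm
  · rw [Hs_m_zero]
    push_cast
    ring
  -- Step 1: reduction in y
  have E1 : ∀ y z : ℤ, Hs n m x y z
      = (∑ j ∈ range n, (n.choose (j+1) : ℤ) * y^(j+1) * (x + (m:ℤ))^(n-(j+1)))
          * (z + (n:ℤ))^m + Hs n m x 0 z := by
    intro y z
    rw [Hs_y_expand n m x y z, Finset.sum_range_succ']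
    congr 1
    · rw [Finset.sum_mul]
      apply Finset.sum_congr rfl
      intro j hj
      have hj' : j + 1 ≤ n := by have := mem_range.mp hj; omega
      rw [ihn (n - (j+1)) (by omega) m x 0 (z + ((j+1 : ℕ) : ℤ))]
      have hc : ((n - (j+1) : ℕ) : ℤ) = (n : ℤ) - (j+1 : ℤ) := by push_cast [hj']; ring
      rw [hc]
      push_cast
      ring
    · simp
  -- Step 2: reduction in z (at y = 0)
  have E2 : ∀ z : ℤ, Hs n m x 0 z
      = (∑ j ∈ range m, (m.choose (j+1) : ℤ) * z^(j+1) * ((n:ℤ))^(m-(j+1)))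
          * (x + (m:ℤ))^n + Hs n m x 0 0 := by
    intro z
    rw [Hs_z_expand n m x 0 z, Finset.sum_range_succ']
    congr 1
    · rw [Finset.sum_mul]
      apply Finset.sum_congr rfl
      intro j hj
      have hj' : j + 1 ≤ m := by have := mem_range.mp hj; omega
      rw [ihm (m - (j+1)) (by omega) x (0 + ((j+1 : ℕ) : ℤ)) 0]
      have hc : ((m - (j+1) : ℕ) : ℤ) = (m : ℤ) - (j+1 : ℤ) := by push_cast [hj']; ring
      rw [hc]
      push_cast
      ring
    · simp
  -- binomial expansions of the targets
  have hyexp : ∀ y : ℤ, (x + y + (m:ℤ))^n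
      = (∑ j ∈ range n, (n.choose (j+1) : ℤ) * y^(j+1) * (x + (m:ℤ))^(n-(j+1)))
          + (x + (m:ℤ))^n := by
    intro y
    rw [show x + y + (m:ℤ) = y + (x + (m:ℤ)) by ring, add_pow, Finset.sum_range_succ']
    congr 1
    · apply Finset.sum_congr rfl
      intro j _
      ring
    · simp
  have hzexp : ∀ z : ℤ, (z + (n:ℤ))^m
      = (∑ j ∈ range m, (m.choose (j+1) : ℤ) * z^(j+1) * ((n:ℤ))^(m-(j+1)))
          + ((n:ℤ))^m := by
    intro z
    rw [show z + (n:ℤ) = z + (n:ℤ) by ring, add_pow, Finset.sum_range_succ']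
    congr 1
    · apply Finset.sum_congr rfl
      intro j _
      ring
    · simp
  -- Step 3: pin down Hs n m x 0 0 using an anchor
  have hval : Hs n m x 0 0 = (x + (m:ℤ))^n * ((n:ℤ))^m := by
    rcases le_or_gt n m with hnm | hmn
    · -- anchor 1 : z = -n
      have hA : Hs n m x 0 (-(n:ℤ)) = 0 := Hs_anchor1 n m x 0 hm hnm
      have h2 := E2 (-(n:ℤ))
      rw [hA] at h2
      have h3 := hzexp (-(n:ℤ))
      have h4 : ((-(n:ℤ)) + (n:ℤ))^m = 0 := by
        rw [show (-(n:ℤ)) + (n:ℤ) = 0 by ring, zero_pow (by omega : m ≠ 0)]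
      rw [h4] at h3
      -- h3 : 0 = S + n^m  so S = -n^m ; h2 : 0 = S * (x+m)^n + Hs n m x 0 0
      have h5 : (∑ j ∈ range m, (m.choose (j+1) : ℤ) * (-(n:ℤ))^(j+1) * ((n:ℤ))^(m-(j+1)))
          = -((n:ℤ))^m := by linarith
      rw [h5] at h2
      linarith
    · -- anchor 2 : y = -x - m (at z = 0)
      have hA : Hs n m x (-x - (m:ℤ)) 0 = 0 := Hs_anchor2 n m x 0 hmn
      have h1 := E1 (-x - (m:ℤ)) 0
      rw [hA] at h1
      have h3 := hyexp (-x - (m:ℤ))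
      have h4 : (x + (-x - (m:ℤ)) + (m:ℤ))^n = 0 := by
        rw [show x + (-x - (m:ℤ)) + (m:ℤ) = 0 by ring, zero_pow (by omega : n ≠ 0)]
      rw [h4] at h3
      have h5 : (∑ j ∈ range n, (n.choose (j+1) : ℤ) * (-x - (m:ℤ))^(j+1) * (x + (m:ℤ))^(n-(j+1)))
          = -(x + (m:ℤ))^n := by linarith
      rw [h5] at h1
      have h6 : (0 + (n:ℤ))^m = ((n:ℤ))^m := by ring
      rw [h6] at h1
      linarith
  -- Final assembly
  rw [E1 y z, E2 z, hval, hyexp y, hzexp z]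
  ring

/-- The `ℕ`-version of the master identity: the count of all pairs decomposes
according to the (conjectured) polyomino counts. -/
theorem starF (K n : ℕ) :
    (∑ i ∈ range (K+1), ∑ t ∈ range (n+1),
      n.choose t * K.choose i * ((i+1)^(t-1) * t^i) * (K-i)^(n-t) * (n-t)^(K-i))
      = (K+1)^n * n^K := by
  have h := Hs_eq n K 1 0 0
  have hz : ((∑ i ∈ range (K+1), ∑ t ∈ range (n+1),
      n.choose t * K.choose i * ((i+1)^(t-1) * t^i) * (K-i)^(n-t) * (n-t)^(K-i) : ℕ) : ℤ)
      = Hs n K 1 0 0 := by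
    rw [Hs]
    conv_rhs => rw [Finset.sum_comm]
    push_cast
    apply Finset.sum_congr rfl
    intro i hi
    apply Finset.sum_congr rfl
    intro t ht
    have him : i ≤ K := by have := mem_range.mp hi; omega
    have htn : t ≤ n := by have := mem_range.mp ht; omega
    have hcK : ((K - i : ℕ) : ℤ) = (K : ℤ) - (i : ℤ) := by push_cast [him]; ring
    have hcn : ((n - t : ℕ) : ℤ) = (n : ℤ) - (t : ℤ) := by push_cast [htn]; ring
    rw [hcK, hcn]
    rcases Nat.eq_zero_or_pos t with rfl | ht1
    · rw [Az_zero]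
      rcases Nat.eq_zero_or_pos i with rfl | hi1
      · norm_num
      · rw [if_neg (by omega)]
        push_cast
        rw [zero_pow (by omega : i ≠ 0)]
        ring
    · rw [Az_pos 1 t i ht1]
      push_cast
      ring
  have : ((∑ i ∈ range (K+1), ∑ t ∈ range (n+1),
      n.choose t * K.choose i * ((i+1)^(t-1) * t^i) * (K-i)^(n-t) * (n-t)^(K-i) : ℕ) : ℤ)
      = (((K+1)^n * n^K : ℕ) : ℤ) := by
    rw [hz, h]
    push_cast
    ring
  exact_mod_cast this


section defs

/-- number of entries of `g` with value at most `i` -/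
def ac {w t : ℕ} (g : Fin t → Fin w) (i : ℕ) : ℕ :=
  (univ.filter fun m => (g m : ℕ) ≤ i).card

/-- number of entries of `h` with value less than `s` -/
def bc {k t : ℕ} (h : Fin k → Fin t) (s : ℕ) : ℕ :=
  (univ.filter fun j => (h j : ℕ) < s).card

/-- the parking/polyomino condition for a pair of functions -/
def Good {K n : ℕ} (g : Fin n → Fin (K + 1)) (h : Fin K → Fin n) : Prop :=
  ∀ i < K, i < bc h (ac g i)

instance {K n : ℕ} (g : Fin n → Fin (K + 1)) (h : Fin K → Fin n) : Decidable (Good g h) :=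
  Nat.decidableBallLT K _

/-- the number of doubly labelled parallelogram polyominoes (width `K+1`, height `n`) -/
noncomputable def Cpoly (K n : ℕ) : ℕ :=
  Nat.card {p : (Fin n → Fin (K + 1)) × (Fin K → Fin n) // Good p.1 p.2}

lemma Cpoly_def (K n : ℕ) :
    Cpoly K n = Fintype.card {p : (Fin n → Fin (K + 1)) × (Fin K → Fin n) // Good p.1 p.2} :=
  Nat.card_eq_fintype_card

variable {K n : ℕ}

lemma ac_mono (g : Fin n → Fin (K + 1)) : Monotone (ac g) := by
  intro i i' hii'
  apply Finset.card_le_card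
  intro m hm
  simp only [mem_filter, mem_univ, true_and] at hm ⊢
  omega

lemma bc_mono (h : Fin K → Fin n) : Monotone (bc h) := by
  intro s s' hss'
  apply Finset.card_le_card
  intro j hj
  simp only [mem_filter, mem_univ, true_and] at hj ⊢
  omega

lemma ac_le (g : Fin n → Fin (K + 1)) (i : ℕ) : ac g i ≤ n := by
  rw [ac]
  calc (univ.filter fun m => (g m : ℕ) ≤ i).card ≤ (univ : Finset (Fin n)).card :=
        Finset.card_filter_le _ _
    _ = n := by rw [card_univ, Fintype.card_fin]

lemma bc_le (h : Fin K → Fin n) (s : ℕ) : bc h s ≤ K := by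
  rw [bc]
  calc (univ.filter fun j => (h j : ℕ) < s).card ≤ (univ : Finset (Fin K)).card :=
        Finset.card_filter_le _ _
    _ = K := by rw [card_univ, Fintype.card_fin]

lemma ac_top (g : Fin n → Fin (K + 1)) : ac g K = n := by
  rw [ac, Finset.filter_true_of_mem, card_univ, Fintype.card_fin]
  intro m _
  exact Nat.lt_succ_iff.mp (g m).isLt

lemma bc_top (h : Fin K → Fin n) : bc h n = K := by
  rw [bc, Finset.filter_true_of_mem, card_univ, Fintype.card_fin]
  intro j _
  exact (h j).isLt

/-- the existence witness used to define the first crossing column -/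
lemma exQ (g : Fin n → Fin (K + 1)) (h : Fin K → Fin n) :
    ∃ i, i = K ∨ (i < K ∧ bc h (ac g i) ≤ i) := ⟨K, Or.inl rfl⟩

/-- the first crossing column (or `K` if the pair is good) -/
def istar (g : Fin n → Fin (K + 1)) (h : Fin K → Fin n) : ℕ :=
  Nat.find (exQ g h)

lemma istar_le (g : Fin n → Fin (K + 1)) (h : Fin K → Fin n) : istar g h ≤ K :=
  Nat.find_le (Or.inl rfl)

lemma istar_below (g : Fin n → Fin (K + 1)) (h : Fin K → Fin n) :
    ∀ i' < istar g h, i' < bc h (ac g i') := by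
  intro i' hi'
  have h1 := Nat.find_min (exQ g h) hi'
  have h2 : i' < K := lt_of_lt_of_le hi' (istar_le g h)
  push_neg at h1
  rcases h1 with ⟨h3, h4⟩
  exact h4 h2

lemma istar_eq_bc (g : Fin n → Fin (K + 1)) (h : Fin K → Fin n) :
    bc h (ac g (istar g h)) = istar g h := by
  have hspec : istar g h = K ∨ (istar g h < K ∧ bc h (ac g (istar g h)) ≤ istar g h) :=
    Nat.find_spec (exQ g h)
  rcases hspec with hK | ⟨hlt, hle⟩
  · rw [hK, ac_top, bc_top]
  · rcases Nat.eq_zero_or_pos (istar g h) with h0 | hpos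
    · omega
    · have := istar_below g h (istar g h - 1) (by omega)
      have hmono : bc h (ac g (istar g h - 1)) ≤ bc h (ac g (istar g h)) :=
        bc_mono h (ac_mono g (by omega))
      omega

/-- a good pair is one without crossing, i.e. `istar = K` -/
lemma good_iff_istar (g : Fin n → Fin (K + 1)) (h : Fin K → Fin n) :
    Good g h ↔ istar g h = K := by
  constructor
  · intro hg
    have hspec : istar g h = K ∨ (istar g h < K ∧ bc h (ac g (istar g h)) ≤ istar g h) :=
      Nat.find_spec (exQ g h)
    rcases hspec with hK | ⟨hlt, hle⟩
    · exact hK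
    · exact absurd (hg _ hlt) (by omega)
  · intro hK i hi
    have := istar_below g h i (by omega)
    exact this

end defs

section transfer
variable {K n : ℕ}

/-- Filtering a predicate supported inside `S` can be done along an order iso `Fin k ≃o S`. -/
lemma card_filter_orderIso {α : Type*} [Fintype α] [LinearOrder α] {k : ℕ}
    (S : Finset α) (e : Fin k ≃o S) (P : α → Prop) [DecidablePred P]
    (hP : ∀ a, P a → a ∈ S) :
    (univ.filter fun x : Fin k => P ((e x : S) : α)).card = (univ.filter P).card := by
  apply Finset.card_bij (fun x _ => ((e x : S) : α))
  · intro x hx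
    simp only [mem_filter, mem_univ, true_and] at hx ⊢
    exact hx
  · intro x _ y _ hxy
    have : (e x : S) = (e y : S) := Subtype.ext hxy
    exact e.injective this
  · intro a ha
    simp only [mem_filter, mem_univ, true_and] at ha
    refine ⟨e.symm ⟨a, hP a ha⟩, by simp [ha], ?_⟩
    simp

/-- value-transfer for the `g`-side counts -/
lemma ac_transfer {i : ℕ} (T : Finset (Fin n)) (g : Fin n → Fin (K + 1))
    (g' : Fin T.card → Fin (i + 1))
    (c1 : ∀ m, m ∈ T ↔ (g m : ℕ) ≤ i)
    (hval : ∀ a, (g' a : ℕ) = (g ((T.orderIsoOfFin rfl a : T) : Fin n) : ℕ)) :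
    ∀ i' < i, ac g' i' = ac g i' := by
  intro i' hi'
  rw [ac, ac]
  rw [Finset.filter_congr (fun a _ => by rw [hval a])]
  exact card_filter_orderIso T (T.orderIsoOfFin rfl) (fun m => (g m : ℕ) ≤ i')
    (fun m hm => (c1 m).mpr (le_trans hm (by omega)))

/-- value-transfer for the `h`-side counts -/
lemma bc_transfer {i : ℕ} (T : Finset (Fin n)) (H : Finset (Fin K)) (hH : H.card = i)
    (h : Fin K → Fin n) (h' : Fin i → Fin T.card)
    (c2 : ∀ j, j ∈ H ↔ (h j : ℕ) < T.card)
    (hval : ∀ b, (h' b : ℕ) = (h ((H.orderIsoOfFin hH b : H) : Fin K) : ℕ)) :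
    ∀ s ≤ T.card, bc h' s = bc h s := by
  intro s hs
  rw [bc, bc]
  rw [Finset.filter_congr (fun b _ => by rw [hval b])]
  exact card_filter_orderIso H (H.orderIsoOfFin hH) (fun j => (h j : ℕ) < s)
    (fun j hj => (c2 j).mpr (lt_of_lt_of_le hj hs))

/-- the classifying map for the crossing decomposition -/
def cl (p : (Fin n → Fin (K + 1)) × (Fin K → Fin n)) :
    ℕ × Finset (Fin n) × Finset (Fin K) :=
  (istar p.1 p.2, univ.filter fun m => (p.1 m : ℕ) ≤ istar p.1 p.2,
    univ.filter fun j => (p.2 j : ℕ) < ac p.1 (istar p.1 p.2))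

lemma cl_snd_card (p : (Fin n → Fin (K + 1)) × (Fin K → Fin n)) :
    (cl p).2.1.card = ac p.1 (istar p.1 p.2) := rfl

lemma cl_trd_card (p : (Fin n → Fin (K + 1)) × (Fin K → Fin n)) :
    (cl p).2.2.card = istar p.1 p.2 := by
  have : (cl p).2.2.card = bc p.2 (ac p.1 (istar p.1 p.2)) := rfl
  rw [this, istar_eq_bc]

/-- characterisation of the fibers of `cl` -/
lemma mem_fiber_iff (p : (Fin n → Fin (K + 1)) × (Fin K → Fin n))
    {i : ℕ} (hiK : i ≤ K) {T : Finset (Fin n)} {H : Finset (Fin K)} (hH : H.card = i) :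
    cl p = (i, T, H) ↔
      (∀ m, m ∈ T ↔ (p.1 m : ℕ) ≤ i) ∧ (∀ j, j ∈ H ↔ (p.2 j : ℕ) < T.card) ∧
        (∀ i' < i, i' < bc p.2 (ac p.1 i')) := by
  constructor
  · intro hcl
    have h1 : istar p.1 p.2 = i := congrArg Prod.fst hcl
    have h2 : univ.filter (fun m => (p.1 m : ℕ) ≤ istar p.1 p.2) = T := by
      have := congrArg (fun q => q.2.1) hcl
      simpa [cl] using this
    have h3 : univ.filter (fun j => (p.2 j : ℕ) < ac p.1 (istar p.1 p.2)) = H := by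
      have := congrArg (fun q => q.2.2) hcl
      simpa [cl] using this
    have hTcard : T.card = ac p.1 i := by
      rw [← h2, h1]
      rfl
    refine ⟨?_, ?_, ?_⟩
    · intro m
      rw [← h2, h1]
      simp
    · intro j
      rw [← h3, h1, hTcard]
      simp
    · intro i' hi'
      exact istar_below p.1 p.2 i' (by omega)
  · rintro ⟨c1, c2, c3⟩
    have hT : T = univ.filter fun m => (p.1 m : ℕ) ≤ i := by
      ext m
      simp [c1 m]
    have hacT : ac p.1 i = T.card := by
      rw [hT]
      rfl
    have hbcT : bc p.2 T.card = i := by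
      have : univ.filter (fun j => (p.2 j : ℕ) < T.card) = H := by
        ext j
        simp [c2 j]
      rw [bc, this, hH]
    have hist : istar p.1 p.2 = i := by
      rw [istar, Nat.find_eq_iff]
      constructor
      · rcases Nat.eq_or_lt_of_le hiK with h | h
        · exact Or.inl h
        · refine Or.inr ⟨h, ?_⟩
          rw [hacT, hbcT]
      · intro i' hi'
        push_neg
        refine ⟨by omega, fun _ => ?_⟩
        exact c3 i' hi'
    rw [cl, hist]
    refine Prod.ext rfl (Prod.ext ?_ ?_)
    · simp only
      rw [← hT]
    · simp only
      rw [hacT]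
      ext j
      simp [c2 j]

end transfer

section fiber
variable {K n : ℕ}

/-- the restriction of a pair to the prefix polyomino -/
def mkPrefix (i : ℕ) (T : Finset (Fin n)) (H : Finset (Fin K)) (hH : H.card = i)
    (p : (Fin n → Fin (K + 1)) × (Fin K → Fin n))
    (c1 : ∀ m, m ∈ T ↔ (p.1 m : ℕ) ≤ i) (c2 : ∀ j, j ∈ H ↔ (p.2 j : ℕ) < T.card) :
    (Fin T.card → Fin (i + 1)) × (Fin i → Fin T.card) :=
  (fun a => ⟨(p.1 ((T.orderIsoOfFin rfl a : T) : Fin n) : ℕ),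
      by have := (c1 _).mp (T.orderIsoOfFin rfl a).2; omega⟩,
    fun b => ⟨(p.2 ((H.orderIsoOfFin hH b : H) : Fin K) : ℕ),
      (c2 _).mp (H.orderIsoOfFin hH b).2⟩)

/-- the restriction of a pair to the free suffix data -/
def mkSuffix (i : ℕ) (T : Finset (Fin n)) (H : Finset (Fin K)) (hH : H.card = i)
    (hTc : Tᶜ.card = n - T.card) (hHc : Hᶜ.card = K - i)
    (p : (Fin n → Fin (K + 1)) × (Fin K → Fin n))
    (c1 : ∀ m, m ∈ T ↔ (p.1 m : ℕ) ≤ i) (c2 : ∀ j, j ∈ H ↔ (p.2 j : ℕ) < T.card) :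
    (Fin (n - T.card) → Fin (K - i)) × (Fin (K - i) → Fin (n - T.card)) :=
  (fun c => ⟨(p.1 ((Tᶜ.orderIsoOfFin hTc c : (Tᶜ : Finset (Fin n))) : Fin n) : ℕ) - (i + 1),
      by
        have hm : ((Tᶜ.orderIsoOfFin hTc c : (Tᶜ : Finset (Fin n))) : Fin n) ∉ T :=
          Finset.mem_compl.mp (Tᶜ.orderIsoOfFin hTc c).2
        have h1 : ¬ ((p.1 ((Tᶜ.orderIsoOfFin hTc c : (Tᶜ : Finset (Fin n))) : Fin n) : ℕ) ≤ i) :=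
          fun hle => hm ((c1 _).mpr hle)
        have h2 := (p.1 ((Tᶜ.orderIsoOfFin hTc c : (Tᶜ : Finset (Fin n))) : Fin n)).isLt
        omega⟩,
    fun d => ⟨(p.2 ((Hᶜ.orderIsoOfFin hHc d : (Hᶜ : Finset (Fin K))) : Fin K) : ℕ) - T.card,
      by
        have hm : ((Hᶜ.orderIsoOfFin hHc d : (Hᶜ : Finset (Fin K))) : Fin K) ∉ H :=
          Finset.mem_compl.mp (Hᶜ.orderIsoOfFin hHc d).2
        have h1 : ¬ ((p.2 ((Hᶜ.orderIsoOfFin hHc d : (Hᶜ : Finset (Fin K))) : Fin K) : ℕ) < T.card) :=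
          fun hlt => hm ((c2 _).mpr hlt)
        have h2 := (p.2 ((Hᶜ.orderIsoOfFin hHc d : (Hᶜ : Finset (Fin K))) : Fin K)).isLt
        omega⟩)

/-- reconstruction of the `g`-component from prefix and suffix data -/
def mkG (i : ℕ) (hiK : i ≤ K) (T : Finset (Fin n)) (hTc : Tᶜ.card = n - T.card)
    (g' : Fin T.card → Fin (i + 1)) (u : Fin (n - T.card) → Fin (K - i)) :
    Fin n → Fin (K + 1) :=
  fun m =>
    if hm : m ∈ T then
      ⟨(g' ((T.orderIsoOfFin rfl).symm ⟨m, hm⟩) : ℕ), by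
        have := (g' ((T.orderIsoOfFin rfl).symm ⟨m, hm⟩)).isLt; omega⟩
    else
      ⟨i + 1 + (u ((Tᶜ.orderIsoOfFin hTc).symm ⟨m, Finset.mem_compl.mpr hm⟩) : ℕ), by
        have := (u ((Tᶜ.orderIsoOfFin hTc).symm ⟨m, Finset.mem_compl.mpr hm⟩)).isLt
        omega⟩

/-- reconstruction of the `h`-component from prefix and suffix data -/
def mkH (i : ℕ) (T : Finset (Fin n)) (ht : T.card ≤ n) (H : Finset (Fin K)) (hH : H.card = i)
    (hHc : Hᶜ.card = K - i)
    (h' : Fin i → Fin T.card) (v : Fin (K - i) → Fin (n - T.card)) :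
    Fin K → Fin n :=
  fun j =>
    if hj : j ∈ H then
      ⟨(h' ((H.orderIsoOfFin hH).symm ⟨j, hj⟩) : ℕ), by
        have := (h' ((H.orderIsoOfFin hH).symm ⟨j, hj⟩)).isLt; omega⟩
    else
      ⟨T.card + (v ((Hᶜ.orderIsoOfFin hHc).symm ⟨j, Finset.mem_compl.mpr hj⟩) : ℕ), by
        have := (v ((Hᶜ.orderIsoOfFin hHc).symm ⟨j, Finset.mem_compl.mpr hj⟩)).isLt
        omega⟩

lemma mkG_mem_T (i : ℕ) (hiK : i ≤ K) (T : Finset (Fin n)) (hTc : Tᶜ.card = n - T.card)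
    (g' : Fin T.card → Fin (i + 1)) (u : Fin (n - T.card) → Fin (K - i)) (m : Fin n) :
    m ∈ T ↔ ((mkG i hiK T hTc g' u) m : ℕ) ≤ i := by
  constructor
  · intro hm
    rw [mkG, dif_pos hm]
    dsimp only
    have := (g' ((T.orderIsoOfFin rfl).symm ⟨m, hm⟩)).isLt
    omega
  · intro hle
    by_contra hm
    rw [mkG, dif_neg hm] at hle
    dsimp only at hle
    omega

lemma mkH_mem_H (i : ℕ) (T : Finset (Fin n)) (ht : T.card ≤ n) (H : Finset (Fin K))
    (hH : H.card = i) (hHc : Hᶜ.card = K - i)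
    (h' : Fin i → Fin T.card) (v : Fin (K - i) → Fin (n - T.card)) (j : Fin K) :
    j ∈ H ↔ ((mkH i T ht H hH hHc h' v) j : ℕ) < T.card := by
  constructor
  · intro hj
    rw [mkH, dif_pos hj]
    dsimp only
    exact (h' ((H.orderIsoOfFin hH).symm ⟨j, hj⟩)).isLt
  · intro hlt
    by_contra hj
    rw [mkH, dif_neg hj] at hlt
    dsimp only at hlt
    omega

lemma mkG_val_prefix (i : ℕ) (hiK : i ≤ K) (T : Finset (Fin n)) (hTc : Tᶜ.card = n - T.card)
    (g' : Fin T.card → Fin (i + 1)) (u : Fin (n - T.card) → Fin (K - i)) (a : Fin T.card) :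
    ((g' a : ℕ)) = ((mkG i hiK T hTc g' u) ((T.orderIsoOfFin rfl a : T) : Fin n) : ℕ) := by
  rw [mkG, dif_pos (T.orderIsoOfFin rfl a).2]
  simp only
  congr 1
  rw [Subtype.coe_eta, OrderIso.symm_apply_apply]

lemma mkH_val_prefix (i : ℕ) (T : Finset (Fin n)) (ht : T.card ≤ n) (H : Finset (Fin K))
    (hH : H.card = i) (hHc : Hᶜ.card = K - i)
    (h' : Fin i → Fin T.card) (v : Fin (K - i) → Fin (n - T.card)) (b : Fin i) :
    ((h' b : ℕ)) = ((mkH i T ht H hH hHc h' v) ((H.orderIsoOfFin hH b : H) : Fin K) : ℕ) := by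
  rw [mkH, dif_pos (H.orderIsoOfFin hH b).2]
  simp only
  congr 1
  rw [Subtype.coe_eta, OrderIso.symm_apply_apply]

end fiber

section fiber2
variable {K n : ℕ}

lemma good_transfer (i : ℕ) (T : Finset (Fin n)) (H : Finset (Fin K)) (hH : H.card = i)
    (g : Fin n → Fin (K + 1)) (h : Fin K → Fin n)
    (g' : Fin T.card → Fin (i + 1)) (h' : Fin i → Fin T.card)
    (c1 : ∀ m, m ∈ T ↔ (g m : ℕ) ≤ i) (c2 : ∀ j, j ∈ H ↔ (h j : ℕ) < T.card)
    (hvg : ∀ a, (g' a : ℕ) = (g ((T.orderIsoOfFin rfl a : T) : Fin n) : ℕ))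
    (hvh : ∀ b, (h' b : ℕ) = (h ((H.orderIsoOfFin hH b : H) : Fin K) : ℕ)) :
    Good g' h' ↔ ∀ i' < i, i' < bc h (ac g i') := by
  have hacT : ac g i = T.card := by
    rw [ac, show univ.filter (fun m => (g m : ℕ) ≤ i) = T by ext m; simp [c1 m]]
  constructor <;> intro hc i' hi'
  · have := hc i' hi'
    rwa [ac_transfer T g g' c1 hvg i' hi',
      bc_transfer T H hH h h' c2 hvh _ (by rw [← hacT]; exact ac_mono g (le_of_lt hi'))] at this
  · have := hc i' hi'
    rwa [← bc_transfer T H hH h h' c2 hvh _ (by rw [← hacT]; exact ac_mono g (le_of_lt hi')),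
      ← ac_transfer T g g' c1 hvg i' hi'] at this

variable (i : ℕ) (hiK : i ≤ K) (T : Finset (Fin n)) (ht : T.card ≤ n)
  (H : Finset (Fin K)) (hH : H.card = i)
  (hTc : Tᶜ.card = n - T.card) (hHc : Hᶜ.card = K - i)

/-- the target type of the fiber bijection -/
abbrev QT {n K : ℕ} (i : ℕ) (T : Finset (Fin n)) (_H : Finset (Fin K)) : Type :=
  {q : (Fin T.card → Fin (i + 1)) × (Fin i → Fin T.card) // Good q.1 q.2} ×
    ((Fin (n - T.card) → Fin (K - i)) × (Fin (K - i) → Fin (n - T.card)))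

/-- the forward map of the fiber bijection -/
def fwd (p : (Fin n → Fin (K + 1)) × (Fin K → Fin n)) (hp : cl p = (i, T, H)) : QT i T H :=
  let hfib := (mem_fiber_iff p hiK hH).mp hp
  (⟨mkPrefix i T H hH p hfib.1 hfib.2.1,
      (good_transfer i T H hH p.1 p.2 _ _ hfib.1 hfib.2.1 (fun _ => rfl) (fun _ => rfl)).mpr
        hfib.2.2⟩,
    mkSuffix i T H hH hTc hHc p hfib.1 hfib.2.1)

/-- the backward map of the fiber bijection -/
def bwd (q : QT i T H) : (Fin n → Fin (K + 1)) × (Fin K → Fin n) :=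
  (mkG i hiK T hTc q.1.1.1 q.2.1, mkH i T ht H hH hHc q.1.1.2 q.2.2)

lemma bwd_mem (q : QT i T H) : cl (bwd i hiK T ht H hH hTc hHc q) = (i, T, H) := by
  apply (mem_fiber_iff _ hiK hH).mpr
  refine ⟨fun m => mkG_mem_T i hiK T hTc _ _ m, fun j => mkH_mem_H i T ht H hH hHc _ _ j, ?_⟩
  exact (good_transfer i T H hH _ _ q.1.1.1 q.1.1.2
    (fun m => mkG_mem_T i hiK T hTc _ _ m) (fun j => mkH_mem_H i T ht H hH hHc _ _ j)
    (fun a => mkG_val_prefix i hiK T hTc _ _ a)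
    (fun b => mkH_val_prefix i T ht H hH hHc _ _ b)).mp q.1.2

lemma left_inv (p : (Fin n → Fin (K + 1)) × (Fin K → Fin n)) (hp : cl p = (i, T, H)) :
    bwd i hiK T ht H hH hTc hHc (fwd i hiK T H hH hTc hHc p hp) = p := by
  obtain ⟨c1, c2, c3⟩ := (mem_fiber_iff p hiK hH).mp hp
  refine Prod.ext ?_ ?_
  · funext m
    apply Fin.ext
    by_cases hm : m ∈ T
    · simp only [bwd, fwd, mkG, mkPrefix, dif_pos hm]
      rw [OrderIso.apply_symm_apply]
    · simp only [bwd, fwd, mkG, mkSuffix, dif_neg hm]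
      rw [OrderIso.apply_symm_apply]
      have h1 : ¬ ((p.1 m : ℕ) ≤ i) := fun hle => hm ((c1 m).mpr hle)
      dsimp only
      omega
  · funext j
    apply Fin.ext
    by_cases hj : j ∈ H
    · simp only [bwd, fwd, mkH, mkPrefix, dif_pos hj]
      rw [OrderIso.apply_symm_apply]
    · simp only [bwd, fwd, mkH, mkSuffix, dif_neg hj]
      rw [OrderIso.apply_symm_apply]
      have h1 : ¬ ((p.2 j : ℕ) < T.card) := fun hlt => hj ((c2 j).mpr hlt)
      dsimp only
      omega

lemma right_inv (q : QT i T H) :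
    fwd i hiK T H hH hTc hHc (bwd i hiK T ht H hH hTc hHc q)
      (bwd_mem i hiK T ht H hH hTc hHc q) = q := by
  obtain ⟨⟨⟨g', h'⟩, hgood⟩, u, v⟩ := q
  refine Prod.ext (Subtype.ext (Prod.ext ?_ ?_)) (Prod.ext ?_ ?_)
  · funext a
    apply Fin.ext
    have := (mkG_val_prefix i hiK T hTc g' u a).symm
    simpa [fwd, bwd, mkPrefix] using this
  · funext b
    apply Fin.ext
    have := (mkH_val_prefix i T ht H hH hHc h' v b).symm
    simpa [fwd, bwd, mkPrefix] using this
  · funext c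
    apply Fin.ext
    simp only [fwd, bwd, mkSuffix, mkG,
      dif_neg (Finset.mem_compl.mp (Tᶜ.orderIsoOfFin hTc c).2)]
    rw [Subtype.coe_eta, OrderIso.symm_apply_apply]
    omega
  · funext d
    apply Fin.ext
    simp only [fwd, bwd, mkSuffix, mkH,
      dif_neg (Finset.mem_compl.mp (Hᶜ.orderIsoOfFin hHc d).2)]
    rw [Subtype.coe_eta, OrderIso.symm_apply_apply]
    omega

end fiber2

section count
variable {K n : ℕ}

lemma fiber_card_eq (i : ℕ) (hiK : i ≤ K) (T : Finset (Fin n)) (H : Finset (Fin K))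
    (hH : H.card = i) :
    (univ.filter fun p : (Fin n → Fin (K + 1)) × (Fin K → Fin n) => cl p = (i, T, H)).card
      = Cpoly i T.card * ((K - i) ^ (n - T.card) * (n - T.card) ^ (K - i)) := by
  have ht : T.card ≤ n := by
    have := Finset.card_le_univ T
    rwa [Fintype.card_fin] at this
  have hTc : Tᶜ.card = n - T.card := by rw [Finset.card_compl, Fintype.card_fin]
  have hHc : Hᶜ.card = K - i := by rw [Finset.card_compl, Fintype.card_fin, hH]
  have hcard : Cpoly i T.card * ((K - i) ^ (n - T.card) * (n - T.card) ^ (K - i))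
      = (univ : Finset (QT i T H)).card := by
    rw [card_univ, Fintype.card_prod, Fintype.card_prod, Fintype.card_fun, Fintype.card_fun]
    simp only [Fintype.card_fin]
    rw [Cpoly_def]
  rw [hcard]
  exact Finset.card_bij'
    (fun p hp => fwd i hiK T H hH hTc hHc p (Finset.mem_filter.mp hp).2)
    (fun q _ => bwd i hiK T ht H hH hTc hHc q)
    (fun p hp => Finset.mem_univ _)
    (fun q hq => Finset.mem_filter.mpr ⟨Finset.mem_univ _, bwd_mem i hiK T ht H hH hTc hHc q⟩)
    (fun p hp => left_inv i hiK T ht H hH hTc hHc p (Finset.mem_filter.mp hp).2)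
    (fun q hq => right_inv i hiK T ht H hH hTc hHc q)

lemma fiber_empty (i : ℕ) (T : Finset (Fin n)) (H : Finset (Fin K)) (hH : H.card ≠ i) :
    (univ.filter fun p : (Fin n → Fin (K + 1)) × (Fin K → Fin n) => cl p = (i, T, H)).card
      = 0 := by
  rw [Finset.card_eq_zero, Finset.filter_eq_empty_iff]
  intro p _
  intro hcl
  apply hH
  have h1 : istar p.1 p.2 = i := congrArg Prod.fst hcl
  have h2 : (cl p).2.2 = H := congrArg (fun q => q.2.2) hcl
  rw [← h2, cl_trd_card, h1]

/-- The crossing decomposition: every pair decomposes as a good prefix plus free suffix. -/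
theorem star (K n : ℕ) :
    (K + 1) ^ n * n ^ K = ∑ i ∈ Finset.range (K + 1), ∑ t ∈ Finset.range (n + 1),
      n.choose t * K.choose i * (Cpoly i t * ((K - i) ^ (n - t) * (n - t) ^ (K - i))) := by
  classical
  have h0 : (K + 1) ^ n * n ^ K
      = (univ : Finset ((Fin n → Fin (K + 1)) × (Fin K → Fin n))).card := by
    rw [card_univ, Fintype.card_prod, Fintype.card_fun, Fintype.card_fun]
    simp [Fintype.card_fin]
  rw [h0]
  have hmap : ∀ p ∈ (univ : Finset ((Fin n → Fin (K + 1)) × (Fin K → Fin n))), cl p ∈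
      (Finset.range (K + 1)) ×ˢ ((univ : Finset (Fin n)).powerset ×ˢ
        (univ : Finset (Fin K)).powerset) := by
    intro p _
    simp only [Finset.mem_product, Finset.mem_range, Finset.mem_powerset]
    exact ⟨Nat.lt_succ_of_le (istar_le p.1 p.2), Finset.subset_univ _, Finset.subset_univ _⟩
  rw [Finset.card_eq_sum_card_fiberwise hmap]
  rw [Finset.sum_product]
  apply Finset.sum_congr rfl
  intro i hi
  have hiK : i ≤ K := by
    have := Finset.mem_range.mp hi
    omega
  rw [Finset.sum_product]
  -- sum over T (powerset of univ) and H
  have inner : ∀ T ∈ (univ : Finset (Fin n)).powerset,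
      (∑ H ∈ (univ : Finset (Fin K)).powerset,
        (univ.filter fun p : (Fin n → Fin (K + 1)) × (Fin K → Fin n) =>
          cl p = (i, T, H)).card)
      = K.choose i * (Cpoly i T.card * ((K - i) ^ (n - T.card) * (n - T.card) ^ (K - i))) := by
    intro T _
    have hsplit : ∀ H ∈ (univ : Finset (Fin K)).powerset,
        (univ.filter fun p : (Fin n → Fin (K + 1)) × (Fin K → Fin n) =>
          cl p = (i, T, H)).card
        = if H.card = i
            then Cpoly i T.card * ((K - i) ^ (n - T.card) * (n - T.card) ^ (K - i))
            else 0 := by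
      intro H _
      by_cases hH : H.card = i
      · rw [if_pos hH]
        exact fiber_card_eq i hiK T H hH
      · rw [if_neg hH]
        exact fiber_empty i T H hH
    rw [Finset.sum_congr rfl hsplit]
    rw [← Finset.sum_filter]
    simp only [Finset.sum_const]
    have : ((univ : Finset (Fin K)).powerset.filter fun H => H.card = i).card = K.choose i := by
      rw [← Finset.powersetCard_eq_filter, Finset.card_powersetCard, card_univ, Fintype.card_fin]
    rw [this, smul_eq_mul]
  rw [Finset.sum_congr rfl inner]
  -- now sum over T via powersetCard
  rw [Finset.sum_powerset]
  simp only [card_univ, Fintype.card_fin]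
  apply Finset.sum_congr rfl
  intro t ht
  have hcongr : ∀ T ∈ Finset.powersetCard t (univ : Finset (Fin n)),
      K.choose i * (Cpoly i T.card * ((K - i) ^ (n - T.card) * (n - T.card) ^ (K - i)))
      = K.choose i * (Cpoly i t * ((K - i) ^ (n - t) * (n - t) ^ (K - i))) := by
    intro T hT
    rw [(Finset.mem_powersetCard.mp hT).2]
  rw [Finset.sum_congr rfl hcongr, Finset.sum_const, Finset.card_powersetCard, card_univ,
    Fintype.card_fin, smul_eq_mul]
  ring

end count

section glue

lemma split_top (K n : ℕ) (F : ℕ → ℕ → ℕ) :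
    (∑ i ∈ Finset.range (K + 1), ∑ t ∈ Finset.range (n + 1), F i t)
      = ((∑ i ∈ Finset.range K, ∑ t ∈ Finset.range (n + 1), F i t)
          + ∑ t ∈ Finset.range n, F K t) + F K n := by
  rw [Finset.sum_range_succ]
  rw [Finset.sum_range_succ (f := F K)]
  rw [add_assoc]

/-- The main counting theorem: doubly labelled parallelogram polyominoes of width `K+1`
and height `n` are counted by the spanning-tree number of `K_{K+1,n}`. -/
theorem Cpoly_formula (K n : ℕ) : Cpoly K n = (K + 1) ^ (n - 1) * n ^ K := by
  have H : ∀ s K n, K + n = s → Cpoly K n = (K + 1) ^ (n - 1) * n ^ K := by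
    intro s
    induction s using Nat.strong_induction_on with
    | _ s ih =>
    intro K n hs
    have h1 := star K n
    have h2 := starF K n
    rw [split_top K n] at h1
    -- massage starF to the same double-sum shape, then split
    have h2' : (K + 1) ^ n * n ^ K
        = ∑ i ∈ Finset.range (K + 1), ∑ t ∈ Finset.range (n + 1),
            n.choose t * K.choose i *
              (((i + 1) ^ (t - 1) * t ^ i) * ((K - i) ^ (n - t) * (n - t) ^ (K - i))) := by
      rw [← h2]
      apply Finset.sum_congr rfl
      intro i _
      apply Finset.sum_congr rfl
      intro t _
      ring
    rw [split_top K n] at h2'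
    -- simplify the top terms
    have htop : ∀ X : ℕ,
        n.choose n * K.choose K * (X * ((K - K) ^ (n - n) * (n - n) ^ (K - K))) = X := by
      intro X
      simp
    rw [htop] at h1
    rw [htop] at h2'
    -- identify the lower parts using the induction hypothesis
    have hA : (∑ i ∈ Finset.range K, ∑ t ∈ Finset.range (n + 1),
          n.choose t * K.choose i * (Cpoly i t * ((K - i) ^ (n - t) * (n - t) ^ (K - i))))
        = ∑ i ∈ Finset.range K, ∑ t ∈ Finset.range (n + 1),
            n.choose t * K.choose i *
              (((i + 1) ^ (t - 1) * t ^ i) * ((K - i) ^ (n - t) * (n - t) ^ (K - i))) := by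
      apply Finset.sum_congr rfl
      intro i hi
      apply Finset.sum_congr rfl
      intro t ht
      have hi' : i < K := Finset.mem_range.mp hi
      have ht' : t < n + 1 := Finset.mem_range.mp ht
      rw [ih (i + t) (by omega) i t rfl]
    have hB : (∑ t ∈ Finset.range n,
          n.choose t * K.choose K * (Cpoly K t * ((K - K) ^ (n - t) * (n - t) ^ (K - K))))
        = ∑ t ∈ Finset.range n,
            n.choose t * K.choose K *
              (((K + 1) ^ (t - 1) * t ^ K) * ((K - K) ^ (n - t) * (n - t) ^ (K - K))) := by
      apply Finset.sum_congr rfl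
      intro t ht
      have ht' : t < n := Finset.mem_range.mp ht
      rw [ih (K + t) (by omega) K t rfl]
    rw [hA, hB] at h1
    omega
  exact H (K + n) K n rfl

end glue

section desort
variable {KK n : ℕ}

lemma sorted_lt_iff (h : Fin KK → Fin n) (i : Fin KK) (c : ℕ) :
    ((h ∘ Tuple.sort h) i : ℕ) < c ↔ (i : ℕ) < bc h c := by
  have hmono : Monotone (h ∘ Tuple.sort h) := Tuple.monotone_sort h
  have hbc : bc (h ∘ Tuple.sort h) c = bc h c := by
    rw [bc, bc]
    apply Finset.card_bij (fun j _ => Tuple.sort h j)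
    · intro j hj
      simp only [Finset.mem_filter, Finset.mem_univ, true_and, Function.comp_apply] at hj ⊢
      exact hj
    · intro a _ b _ hab
      exact (Tuple.sort h).injective hab
    · intro a ha
      simp only [Finset.mem_filter, Finset.mem_univ, true_and] at ha
      exact ⟨(Tuple.sort h).symm a, by simp [ha], by simp⟩
  constructor
  · intro hlt
    rw [← hbc, bc]
    have hsub : Finset.Iic i ⊆ Finset.univ.filter
        (fun j => ((h ∘ Tuple.sort h) j : ℕ) < c) := by
      intro j hj
      rw [Finset.mem_Iic] at hj
      simp only [Finset.mem_filter, Finset.mem_univ, true_and]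
      have h1 : (h ∘ Tuple.sort h) j ≤ (h ∘ Tuple.sort h) i := hmono hj
      have h2 : ((h ∘ Tuple.sort h) j : ℕ) ≤ ((h ∘ Tuple.sort h) i : ℕ) := h1
      omega
    have hcard := Finset.card_le_card hsub
    rw [Fin.card_Iic] at hcard
    omega
  · intro hlt
    by_contra hge
    push_neg at hge
    rw [← hbc, bc] at hlt
    have hsub : Finset.univ.filter (fun j => ((h ∘ Tuple.sort h) j : ℕ) < c)
        ⊆ Finset.Iio i := by
      intro j hj
      simp only [Finset.mem_filter, Finset.mem_univ, true_and] at hj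
      rw [Finset.mem_Iio]
      by_contra hij
      push_neg at hij
      have h1 : (h ∘ Tuple.sort h) i ≤ (h ∘ Tuple.sort h) j := hmono hij
      have h2 : ((h ∘ Tuple.sort h) i : ℕ) ≤ ((h ∘ Tuple.sort h) j : ℕ) := h1
      omega
    have hcard := Finset.card_le_card hsub
    rw [Fin.card_Iio] at hcard
    omega

end desort

/-- The number of doubly labelled parallelogram polyominoes with fixed sink of
width `k` and height `n`, encoded as pairs `(g, h)` with `g : Fin n → Fin k` the
column of each north-step label, `h : Fin (k-1) → Fin n` the height of each
labelled east step of the lower path, and the weakly increasing rearrangement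
`h↑ = h ∘ Tuple.sort h` satisfying `h↑ i < #{m : g m ≤ i}`, equals
`k^(n-1) * n^(k-1)`, the number of spanning trees of `K_{k,n}`. -/
theorem stmt7 (k n : ℕ) (hk : 1 ≤ k) (hn : 1 ≤ n) :
    Nat.card {p : (Fin n → Fin k) × (Fin (k - 1) → Fin n) //
        ∀ i : Fin (k - 1),
          ((p.2 ∘ Tuple.sort p.2) i : ℕ) <
            (Finset.univ.filter fun m : Fin n => (p.1 m : ℕ) ≤ (i : ℕ)).card} =
      k ^ (n - 1) * n ^ (k - 1) := by
  obtain ⟨K, rfl⟩ : ∃ K, k = K + 1 := ⟨k - 1, by omega⟩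
  simp only [Nat.add_sub_cancel]
  have hEquiv : Nat.card {p : (Fin n → Fin (K + 1)) × (Fin K → Fin n) //
      ∀ i : Fin K,
        ((p.2 ∘ Tuple.sort p.2) i : ℕ) <
          (Finset.univ.filter fun m : Fin n => (p.1 m : ℕ) ≤ (i : ℕ)).card}
      = Cpoly K n := by
    rw [Cpoly]
    apply Nat.card_congr
    apply Equiv.subtypeEquivRight
    intro p
    constructor
    · intro hcond i' hi'
      have := (sorted_lt_iff p.2 ⟨i', hi'⟩ (ac p.1 i')).mp (hcond ⟨i', hi'⟩)
      exact this
    · intro hg i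
      exact (sorted_lt_iff p.2 i (ac p.1 (i : ℕ))).mpr (hg (i : ℕ) i.isLt)
  exact hEquiv.trans (Cpoly_formula K n)
end

section
/- Fix natural numbers k ≥ 1 and n ≥ 1, let σ be a permutation of Fin n and τ a permutation of Fin (k-1). Let S be the set of pairs (g, h) where g : Fin n → Fin k, h : Fin (k-1) → Fin n, and, denoting by h↑ the weakly increasing rearrangement of h, for every i : Fin (k-1) one has (h↑ i : ℕ) < card { m : Fin n | (g m : ℕ) ≤ (i : ℕ) }. Let c(σ) be the number of orbits of σ on Fin n and c(τ) the number of orbits of τ on Fin (k-1). Then card { (g, h) ∈ S | g ∘ σ = g and h ∘ τ = h } = k^(c(σ)-1) · n^(c(τ)). -/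
open Finset
open Fin.NatCast

lemma scalar_ediv (K v α V : ℤ) (hK : 0 < K)
    (hV : 0 ≤ V) (hV' : V ≤ K) :
    (α + V - v) / K - (α - v) / K = if (v - α - 1) % K < V then 1 else 0 := by
  set q := (v - α - 1) / K with hq
  set r := (v - α - 1) % K with hr
  have hr0 : 0 ≤ r := Int.emod_nonneg _ (by omega)
  have hrK : r < K := Int.emod_lt_of_pos _ hK
  have hqr : v - α - 1 = K * q + r := (Int.mul_ediv_add_emod _ _).symm
  have h1 : α - v = (K - r - 1) + (-q - 1) * K := by linear_combination -hqr
  have h2 : (α - v) / K = -q - 1 := by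
    rw [h1, Int.add_mul_ediv_right _ _ (by omega), Int.ediv_eq_zero_of_lt (by omega) (by omega)]
    ring
  by_cases hc : r < V
  · have h3 : α + V - v = (V - r - 1) + (-q) * K := by linear_combination -hqr
    have h4 : (α + V - v) / K = -q := by
      rw [h3, Int.add_mul_ediv_right _ _ (by omega), Int.ediv_eq_zero_of_lt (by omega) (by omega)]
      ring
    simp only [if_pos hc, h4, h2]; ring
  · have h3 : α + V - v = (V + K - r - 1) + (-q - 1) * K := by linear_combination -hqr
    have h4 : (α + V - v) / K = -q - 1 := by
      rw [h3, Int.add_mul_ediv_right _ _ (by omega), Int.ediv_eq_zero_of_lt (by omega) (by omega)]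
      ring
    simp only [if_neg hc, h4, h2]; ring

/-- quasi-periodic staircase counting function of `g`. -/
def Phi (k : ℕ) {n : ℕ} (g : Fin n → Fin k) (x : ℤ) : ℤ :=
  ∑ m, ((x - (g m : ℤ)) / k + 1)

/-- quasi-periodic counting function of `h` (values strictly below `w`). -/
def Nh (n : ℕ) {K : ℕ} (h : Fin K → Fin n) (w : ℤ) : ℤ :=
  ∑ j, ((w - 1 - (h j : ℤ)) / n + 1)

lemma Phi_period {k n : ℕ} (hk : 0 < k) (g : Fin n → Fin k) (x : ℤ) :
    Phi k g (x + k) = Phi k g x + n := by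
  unfold Phi
  have : ∀ m : Fin n, (x + k - (g m : ℤ)) / k + 1 = ((x - (g m : ℤ)) / k + 1) + 1 := by
    intro m
    have e : x + (k:ℤ) - (g m : ℤ) = (x - (g m : ℤ)) + 1 * k := by ring
    rw [e, Int.add_mul_ediv_right _ _ (by exact_mod_cast hk.ne')]
  rw [Finset.sum_congr rfl fun m _ => this m, Finset.sum_add_distrib]
  simp

lemma Nh_period {n K : ℕ} (hn : 0 < n) (h : Fin K → Fin n) (w : ℤ) :
    Nh n h (w + n) = Nh n h w + K := by
  unfold Nh
  have : ∀ j : Fin K, (w + n - 1 - (h j : ℤ)) / n + 1 = ((w - 1 - (h j : ℤ)) / n + 1) + 1 := by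
    intro j
    have e : w + (n:ℤ) - 1 - (h j : ℤ) = (w - 1 - (h j : ℤ)) + 1 * n := by ring
    rw [e, Int.add_mul_ediv_right _ _ (by exact_mod_cast hn.ne')]
  rw [Finset.sum_congr rfl fun j _ => this j, Finset.sum_add_distrib]
  simp

lemma Phi_diff {k n : ℕ} (hk : 0 < k) (g : Fin n → Fin k) (α V : ℤ)
    (h0 : 0 ≤ V) (h1 : V ≤ k) :
    Phi k g (α + V) - Phi k g α =
      ((univ.filter fun m : Fin n => ((g m : ℤ) - α - 1) % k < V).card : ℤ) := by
  unfold Phi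
  rw [← Finset.sum_sub_distrib, ← Finset.sum_boole]
  refine Finset.sum_congr rfl fun m _ => ?_
  have hs := scalar_ediv k (g m) α V (by exact_mod_cast hk) h0 h1
  have e : (α + V - (g m : ℤ)) / k + 1 - ((α - (g m : ℤ)) / k + 1)
      = (α + V - (g m : ℤ)) / k - (α - (g m : ℤ)) / k := by ring
  rw [e, hs]

lemma Nh_diff {n K : ℕ} (hn : 0 < n) (h : Fin K → Fin n) (α V : ℤ)
    (h0 : 0 ≤ V) (h1 : V ≤ n) :
    Nh n h (α + V) - Nh n h α =
      ((univ.filter fun j : Fin K => ((h j : ℤ) - α) % n < V).card : ℤ) := by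
  unfold Nh
  rw [← Finset.sum_sub_distrib, ← Finset.sum_boole]
  refine Finset.sum_congr rfl fun j _ => ?_
  have hs := scalar_ediv n (h j) (α - 1) V (by exact_mod_cast hn) h0 h1
  have e : (α + V - 1 - (h j : ℤ)) / n + 1 - ((α - 1 - (h j : ℤ)) / n + 1)
      = ((α - 1) + V - (h j : ℤ)) / n - ((α - 1) - (h j : ℤ)) / n := by ring
  have e2 : (h j : ℤ) - (α - 1) - 1 = (h j : ℤ) - α := by ring
  rw [e, hs, e2]

lemma Phi_neg {k n : ℕ} (hk : 0 < k) (g : Fin n → Fin k) (c : ℕ) (hc : c < k) :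
    Phi k g (-1 - c) = -((univ.filter fun m : Fin n => k ≤ (g m : ℕ) + c).card : ℤ) := by
  unfold Phi
  have key : ∀ m : Fin n, (-1 - (c:ℤ) - (g m : ℤ)) / k + 1
      = -(if k ≤ (g m : ℕ) + c then (1:ℤ) else 0) := by
    intro m
    have hv : (g m : ℕ) < k := (g m).isLt
    by_cases hcc : k ≤ (g m : ℕ) + c
    · have e : -1 - (c:ℤ) - (g m : ℤ) = (2*k - 1 - c - (g m : ℤ)) + (-2) * k := by ring
      rw [e, Int.add_mul_ediv_right _ _ (by exact_mod_cast hk.ne'),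
        Int.ediv_eq_zero_of_lt (by push_cast; omega) (by push_cast; omega)]
      simp [hcc]
    · have e : -1 - (c:ℤ) - (g m : ℤ) = ((k:ℤ) - 1 - c - (g m : ℤ)) + (-1) * k := by ring
      rw [e, Int.add_mul_ediv_right _ _ (by exact_mod_cast hk.ne'),
        Int.ediv_eq_zero_of_lt (by push_cast; omega) (by push_cast; omega)]
      simp [hcc]
  rw [Finset.sum_congr rfl fun m _ => key m, Finset.sum_neg_distrib, Finset.sum_boole]

/-- Abstract cycle lemma: if `z` is quasi-periodic with drift `+1` per period `k`,
there is exactly one residue `a` in `[0,k)` that weakly dominates the following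
window of length `k`. -/
lemma cycle_unique (k : ℕ) (hk : 0 < k) (z : ℤ → ℤ) (hz : ∀ x, z (x + k) = z x + 1) :
    ∃! a : Fin k, ∀ b : ℤ, (a : ℤ) < b → b < (a : ℤ) + k → z b ≤ z a := by
  haveI : NeZero k := ⟨hk.ne'⟩
  obtain ⟨a₀, -, hmax⟩ := Finset.exists_max_image (univ : Finset (Fin k))
    (fun a : Fin k => (k : ℤ) * z (a : ℤ) - (a : ℤ)) ⟨0, mem_univ _⟩
  have good : ∀ a : Fin k,
      (∀ b : Fin k, (k:ℤ) * z (b : ℤ) - (b : ℤ) ≤ (k:ℤ) * z (a : ℤ) - (a : ℤ)) →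
      ∀ b : ℤ, (a : ℤ) < b → b < (a : ℤ) + k → z b ≤ z a := by
    intro a ha b hb1 hb2
    have hav : (a : ℤ) < k := by exact_mod_cast a.isLt
    have hb0 : 0 < b := by omega
    have key : (k:ℤ) * z b ≤ (k:ℤ) * z (a : ℤ) + ((k:ℤ) - 1) := by
      by_cases hbk : b < k
      · have hbf : ((⟨b.toNat, by omega⟩ : Fin k) : ℤ) = b := by simp; omega
        have h5 := ha ⟨b.toNat, by omega⟩
        rw [hbf] at h5
        linarith
      · have hbf : ((⟨(b - k).toNat, by omega⟩ : Fin k) : ℤ) = b - k := by simp; omega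
        have h5 := ha ⟨(b - k).toNat, by omega⟩
        rw [hbf] at h5
        have hzz : z b = z (b - k) + 1 := by
          have := hz (b - k); simp only [sub_add_cancel] at this; omega
        have hzz2 : (k:ℤ) * z (b - k) = (k:ℤ) * z b - k := by rw [hzz]; ring
        linarith
    have hlt : (k:ℤ) * z b < (k:ℤ) * (z (a : ℤ) + 1) := by
      have : (k:ℤ) * (z (a : ℤ) + 1) = (k:ℤ) * z (a : ℤ) + k := by ring
      omega
    have := lt_of_mul_lt_mul_left hlt (by positivity : (0:ℤ) ≤ (k:ℤ))
    omega
  have uniq : ∀ x y : Fin k,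
      (∀ b : ℤ, (x : ℤ) < b → b < (x : ℤ) + k → z b ≤ z x) →
      (∀ b : ℤ, (y : ℤ) < b → b < (y : ℤ) + k → z b ≤ z y) →
      (x : ℤ) < (y : ℤ) → False := by
    intro x y hx hy hxy
    have hyk : (y : ℤ) < k := by exact_mod_cast y.isLt
    have hx0 : 0 ≤ (x : ℤ) := Int.natCast_nonneg _
    have h1 : z (y : ℤ) ≤ z (x : ℤ) := hx _ hxy (by omega)
    have h2 : z ((x : ℤ) + k) ≤ z (y : ℤ) := hy _ (by omega) (by omega)
    have h3 : z ((x : ℤ) + k) = z (x : ℤ) + 1 := hz _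
    omega
  refine ⟨a₀, good a₀ (fun b => hmax b (mem_univ _)), ?_⟩
  intro y hy
  by_contra hne
  rcases lt_or_gt_of_ne (fun h : (y : ℤ) = (a₀ : ℤ) => hne (Fin.ext (by exact_mod_cast h))) with h | h
  · exact uniq y a₀ hy (good a₀ (fun b => hmax b (mem_univ _))) h
  · exact uniq a₀ y (good a₀ (fun b => hmax b (mem_univ _))) hy h

section defs
variable {k n : ℕ}

def Cond' (g : Fin n → Fin k) (h : Fin (k - 1) → Fin n) : Prop :=
  ∀ i : Fin (k - 1), (i : ℕ) + 1 ≤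
    (univ.filter fun j => (h j : ℕ) <
      (univ.filter fun m : Fin n => (g m : ℕ) ≤ (i : ℕ)).card).card

def sct (g : Fin n → Fin k) (c : Fin k) : ℕ :=
  (univ.filter fun m => k ≤ (g m : ℕ) + (c : ℕ)).card

def gsh (g : Fin n → Fin k) (c : Fin k) : Fin n → Fin k := fun m => g m + c

def hsh [NeZero n] (g : Fin n → Fin k) (h : Fin (k - 1) → Fin n) (c : Fin k) :
    Fin (k - 1) → Fin n := fun j => h j + (sct g c : Fin n)

end defs

section key
variable {k n : ℕ}

lemma key_exists_unique (hk : 0 < k) (hn : 0 < n) [NeZero n]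
    (g : Fin n → Fin k) (h : Fin (k - 1) → Fin n) :
    ∃! c : Fin k, Cond' (gsh g c) (hsh g h c) := by
  classical
  set u : ℤ → ℤ := fun x => Nh n h (Phi k g x) with hu
  set z : ℤ → ℤ := fun x => x - u x with hzdef
  have hkm1 : ((k - 1 : ℕ) : ℤ) = (k : ℤ) - 1 := by push_cast [hk]; ring
  have hz : ∀ x, z (x + k) = z x + 1 := by
    intro x
    have h1 : u (x + k) = u x + (k - 1 : ℕ) := by
      simp only [hu, Phi_period hk g x, Nh_period hn h (Phi k g x)]
    simp only [hzdef, h1]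
    omega
  -- the core equivalence for every shift c
  have core : ∀ c : Fin k, (Cond' (gsh g c) (hsh g h c) ↔
      ∀ b : ℤ, (-1 - (c : ℤ)) < b → b < (-1 - (c : ℤ)) + k → z b ≤ z (-1 - (c : ℤ))) := by
    intro c
    set a : ℤ := -1 - (c : ℤ) with ha
    have hPhia : Phi k g a = -(sct g c : ℤ) := by
      have := Phi_neg hk g (c : ℕ) c.isLt
      rw [ha]
      exact_mod_cast this
    have hA : ∀ i : Fin (k - 1),
        ((univ.filter fun m => ((gsh g c) m : ℕ) ≤ (i : ℕ)).card : ℤ)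
          = Phi k g (a + 1 + (i : ℕ)) - Phi k g a := by
      intro i
      have hik : ((i : ℕ) : ℤ) + 1 ≤ (k : ℤ) := by
        have := i.isLt; push_cast; omega
      have hd := Phi_diff hk g a (((i : ℕ) : ℤ) + 1) (by positivity) hik
      have e : a + (((i : ℕ) : ℤ) + 1) = a + 1 + (i : ℕ) := by ring
      rw [e] at hd
      rw [hd]
      congr 1
      apply congrArg
      apply Finset.filter_congr
      intro m _
      show ((g m + c : Fin k) : ℕ) ≤ (i : ℕ) ↔ _
      rw [Fin.val_add]
      have e1 : (g m : ℤ) - a - 1 = ((((g m : ℕ) + (c : ℕ)) : ℕ) : ℤ) := by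
        rw [ha]; push_cast; ring
      rw [e1, ← Int.natCast_mod]
      generalize ((g m : ℕ) + (c : ℕ)) % k = y
      constructor
      · intro hy; exact_mod_cast by omega
      · intro hy; omega
    have hH : ∀ i : Fin (k - 1),
        ((univ.filter fun j => ((hsh g h c) j : ℕ) <
            (univ.filter fun m => ((gsh g c) m : ℕ) ≤ (i : ℕ)).card).card : ℤ)
          = u (a + 1 + (i : ℕ)) - u a := by
      intro i
      set V : ℕ := (univ.filter fun m => ((gsh g c) m : ℕ) ≤ (i : ℕ)).card with hV
      have hVn : V ≤ n := by
        rw [hV]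
        refine (Finset.card_filter_le _ _).trans ?_
        simp
      have hd := Nh_diff hn h (Phi k g a) ((V : ℕ) : ℤ) (by positivity) (by exact_mod_cast hVn)
      have e : Phi k g a + ((V : ℕ) : ℤ) = Phi k g (a + 1 + (i : ℕ)) := by
        have := hA i
        rw [← hV] at this
        omega
      rw [e] at hd
      simp only [hu]
      rw [hd]
      congr 1
      apply congrArg
      apply Finset.filter_congr
      intro j _
      show ((h j + ((sct g c : ℕ) : Fin n) : Fin n) : ℕ) < V ↔ _
      rw [Fin.val_add, Fin.val_natCast]
      have e1 : (h j : ℤ) - Phi k g a = ((((h j : ℕ) + sct g c) : ℕ) : ℤ) := by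
        rw [hPhia]; push_cast; ring
      rw [e1, ← Int.natCast_mod, Nat.add_mod_mod]
      generalize ((h j : ℕ) + sct g c) % n = y
      constructor
      · intro hy; exact_mod_cast hy
      · intro hy; exact_mod_cast hy
    -- now the equivalence with the window condition for z
    unfold Cond'
    constructor
    · intro hc b hb1 hb2
      have hb0 : 0 ≤ b - a - 1 := by omega
      have hbk : b - a - 1 < ((k : ℤ) - 1) := by omega
      have hik : (b - a - 1).toNat < k - 1 := by omega
      set i : Fin (k - 1) := ⟨(b - a - 1).toNat, hik⟩ with hi
      have hiv : ((i : ℕ) : ℤ) = b - a - 1 := by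
        simp [hi]; omega
      have h1 := hc i
      have h2 := hH i
      have e : a + 1 + ((i : ℕ) : ℤ) = b := by omega
      rw [e] at h2
      have h3 : ((i : ℕ) : ℤ) + 1 ≤ u b - u a := by
        have : (((univ.filter fun j => ((hsh g h c) j : ℕ) <
            (univ.filter fun m => ((gsh g c) m : ℕ) ≤ (i : ℕ)).card).card : ℕ) : ℤ)
            = u b - u a := h2
        omega
      simp only [hzdef]
      omega
    · intro hc i
      have hb1 : a < a + 1 + ((i : ℕ) : ℤ) := by omega
      have hb2 : a + 1 + ((i : ℕ) : ℤ) < a + k := by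
        have := i.isLt
        have : ((i : ℕ) : ℤ) < (k : ℤ) - 1 := by omega
        omega
      have h4 := hc (a + 1 + ((i : ℕ) : ℤ)) hb1 hb2
      have h2 := hH i
      simp only [hzdef] at h4
      omega
  -- transfer along c ↦ k - 1 - c using periodicity
  have shift : ∀ x : ℤ, (∀ b : ℤ, x < b → b < x + k → z b ≤ z x) ↔
      (∀ b : ℤ, x + k < b → b < x + k + k → z b ≤ z (x + k)) := by
    intro x
    have e2 := hz x
    constructor
    · intro hx b h1 h2
      have h3 := hx (b - k) (by omega) (by omega)
      have e1 := hz (b - k)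
      simp only [sub_add_cancel] at e1
      omega
    · intro hx b h1 h2
      have h3 := hx (b + k) (by omega) (by omega)
      have e1 := hz b
      omega
  obtain ⟨a, hga, huq⟩ := cycle_unique k hk z hz
  have hcv : ∀ c : Fin k, (-1 - (c : ℤ)) + k = ((⟨k - 1 - (c : ℕ), by omega⟩ : Fin k) : ℤ) := by
    intro c
    have := c.isLt
    simp only [Fin.val_mk]
    have h1 : ((k - 1 - (c : ℕ) : ℕ) : ℤ) = (k : ℤ) - 1 - ((c : ℕ) : ℤ) := by omega
    omega
  have core2 : ∀ c : Fin k, (Cond' (gsh g c) (hsh g h c) ↔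
      ∀ b : ℤ, ((⟨k - 1 - (c : ℕ), by omega⟩ : Fin k) : ℤ) < b →
        b < ((⟨k - 1 - (c : ℕ), by omega⟩ : Fin k) : ℤ) + k →
        z b ≤ z ((⟨k - 1 - (c : ℕ), by omega⟩ : Fin k) : ℤ)) := by
    intro c
    rw [core c, shift (-1 - (c : ℤ))]
    rw [hcv c]
  refine ⟨⟨k - 1 - (a : ℕ), by omega⟩, ?_, ?_⟩
  · refine (core2 ⟨k - 1 - (a : ℕ), by omega⟩).mpr ?_
    have e : (⟨k - 1 - ((⟨k - 1 - (a : ℕ), by omega⟩ : Fin k) : ℕ), by omega⟩ : Fin k) = a := by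
      apply Fin.ext
      simp only [Fin.val_mk]
      have := a.isLt
      omega
    rw [e]
    exact hga
  · intro y hy
    rw [core2 y] at hy
    have := huq _ hy
    apply Fin.ext
    have hv : k - 1 - (y : ℕ) = (a : ℕ) := congrArg Fin.val this
    have := y.isLt
    simp only [Fin.val_mk]
    omega

end key


lemma sorted_lt_iff_s8 {K n : ℕ} (h : Fin K → Fin n) (i : Fin K) (V : ℕ) :
    ((h ∘ Tuple.sort h) i : ℕ) < V ↔
      (i : ℕ) + 1 ≤ (univ.filter fun j => (h j : ℕ) < V).card := by
  have hmono : Monotone (h ∘ Tuple.sort h) := Tuple.monotone_sort h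
  have hcount : (univ.filter fun j => (h j : ℕ) < V).card
      = (univ.filter fun j => ((h ∘ Tuple.sort h) j : ℕ) < V).card := by
    apply Finset.card_equiv (Tuple.sort h).symm
    intro j
    simp [Equiv.apply_symm_apply]
  rw [hcount]
  constructor
  · intro hlt
    have hsub : Finset.Iic i ⊆ univ.filter fun j => ((h ∘ Tuple.sort h) j : ℕ) < V := by
      intro j hj
      rw [Finset.mem_Iic] at hj
      refine Finset.mem_filter.mpr ⟨Finset.mem_univ _, lt_of_le_of_lt ?_ hlt⟩
      exact hmono hj
    calc (i : ℕ) + 1 = (Finset.Iic i).card := (Fin.card_Iic i).symm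
      _ ≤ _ := Finset.card_le_card hsub
  · intro hcard
    by_contra hV
    push_neg at hV
    have hsub : (univ.filter fun j => ((h ∘ Tuple.sort h) j : ℕ) < V) ⊆ Finset.Iio i := by
      intro j hj
      rw [Finset.mem_filter] at hj
      rw [Finset.mem_Iio]
      by_contra hij
      push_neg at hij
      have hle : ((h ∘ Tuple.sort h) i : ℕ) ≤ ((h ∘ Tuple.sort h) j : ℕ) := hmono hij
      have := hj.2
      omega
    have := (Finset.card_le_card hsub).trans_eq (Fin.card_Iio i)
    omega

lemma card_fixed_fun {N K : ℕ} (σ : Equiv.Perm (Fin N)) :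
    Nat.card {g : Fin N → Fin K // g ∘ σ = g}
      = K ^ Nat.card (MulAction.orbitRel.Quotient (Subgroup.zpowers σ) (Fin N)) := by
  classical
  have hzp : ∀ (g : Fin N → Fin K), g ∘ σ = g → ∀ (t : ℤ) (x : Fin N), g ((σ ^ t) x) = g x := by
    intro g hg t
    induction t using Int.induction_on with
    | zero => simp
    | succ t ih =>
        intro x
        have e : (σ ^ ((t : ℤ) + 1)) x = (σ ^ (t : ℤ)) (σ x) := by
          rw [zpow_add_one]
          rfl
        rw [e, ih]
        exact congrFun hg x
    | pred t ih =>
        intro x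
        have e : (σ ^ (-(t : ℤ) - 1)) x = (σ ^ (-(t : ℤ))) (σ⁻¹ x) := by
          rw [zpow_sub_one]
          rfl
        rw [e, ih]
        have := congrFun hg (σ⁻¹ x)
        simpa using this.symm
  let e : {g : Fin N → Fin K // g ∘ σ = g} ≃
      (MulAction.orbitRel.Quotient (Subgroup.zpowers σ) (Fin N) → Fin K) :=
  { toFun := fun gp => Quotient.lift gp.1 (by
      intro x y hxy
      have hxy' : x ∈ MulAction.orbit (Subgroup.zpowers σ) y :=
        (MulAction.orbitRel_apply (G := Subgroup.zpowers σ)).mp hxy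
      obtain ⟨p, hp⟩ := hxy'
      obtain ⟨t, ht⟩ := Subgroup.mem_zpowers_iff.mp p.2
      have : x = (σ ^ t) y := by
        rw [← hp, ht]
        rfl
      rw [this, hzp gp.1 gp.2 t y])
    invFun := fun f => ⟨fun x => f (Quotient.mk'' x), by
      funext x
      show f (Quotient.mk'' (σ x)) = f (Quotient.mk'' x)
      congr 1
      apply Quotient.sound'
      exact (MulAction.orbitRel_apply (G := Subgroup.zpowers σ)).mpr
        ⟨⟨σ, Subgroup.mem_zpowers σ⟩, rfl⟩⟩
    left_inv := fun gp => Subtype.ext (funext fun x => rfl)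
    right_inv := fun f => funext fun q => Quotient.inductionOn' q fun x => rfl }
  rw [Nat.card_congr e, Nat.card_fun]
  simp

lemma fin_sub_add_cancel {k : ℕ} (a b : Fin k) : a - b + b = a := by
  apply Fin.ext
  rw [Fin.val_add, Fin.sub_def, Nat.mod_add_mod]
  have hb : (b : ℕ) < k := b.isLt
  have ha : (a : ℕ) < k := a.isLt
  have e : k - (b : ℕ) + a + b = a + k := by omega
  rw [e, Nat.add_mod_right, Nat.mod_eq_of_lt ha]
lemma fin_add_sub_cancel {k : ℕ} (a b : Fin k) : a + b - b = a := by
  apply Fin.ext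
  rw [Fin.sub_def]
  simp only [Fin.val_add, Fin.val_mk]
  rw [Nat.add_mod_mod]
  have hb : (b : ℕ) < k := b.isLt
  have e : k - (b : ℕ) + ((a : ℕ) + b) = a + k := by omega
  rw [e, Nat.add_mod_right, Nat.mod_eq_of_lt a.isLt]

/-- Fixed-point count for the action of `(σ, τ) ∈ S_n × S_{k-1}` on doubly
labelled parallelogram polyominoes with fixed sink of width `k` and height `n`
(encoded as pairs `(g, h)` with `g : Fin n → Fin k`, `h : Fin (k-1) → Fin n`,
whose weakly increasing rearrangement `h↑ = h ∘ Tuple.sort h` satisfies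
`h↑ i < #{m : g m ≤ i}`): it equals `k^(c(σ)-1) * n^(c(τ))` where `c(σ)`, `c(τ)`
are the numbers of orbits of `σ` and `τ`. -/
theorem stmt8 (k n : ℕ) (hk : 1 ≤ k) (hn : 1 ≤ n) (σ : Equiv.Perm (Fin n))
    (τ : Equiv.Perm (Fin (k - 1))) :
    Nat.card {p : (Fin n → Fin k) × (Fin (k - 1) → Fin n) //
        (∀ i : Fin (k - 1),
          ((p.2 ∘ Tuple.sort p.2) i : ℕ) <
            (Finset.univ.filter fun m : Fin n => (p.1 m : ℕ) ≤ (i : ℕ)).card) ∧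
        p.1 ∘ σ = p.1 ∧ p.2 ∘ τ = p.2} =
      k ^ (Nat.card (MulAction.orbitRel.Quotient (Subgroup.zpowers σ) (Fin n)) - 1) *
        n ^ Nat.card (MulAction.orbitRel.Quotient (Subgroup.zpowers τ) (Fin (k - 1))) := by
  classical
  have hk0 : 0 < k := hk
  have hn0 : 0 < n := hn
  haveI : NeZero n := ⟨hn0.ne'⟩
  set cσ := Nat.card (MulAction.orbitRel.Quotient (Subgroup.zpowers σ) (Fin n)) with hcσ
  set cτ := Nat.card (MulAction.orbitRel.Quotient (Subgroup.zpowers τ) (Fin (k - 1))) with hcτ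
  have condiff : ∀ (g : Fin n → Fin k) (h : Fin (k - 1) → Fin n),
      (∀ i : Fin (k - 1), ((h ∘ Tuple.sort h) i : ℕ) <
          (Finset.univ.filter fun m : Fin n => (g m : ℕ) ≤ (i : ℕ)).card) ↔ Cond' g h :=
    fun g h => forall_congr' fun i => sorted_lt_iff_s8 h i _
  have key : ∀ (g : Fin n → Fin k) (h : Fin (k - 1) → Fin n),
      ∃! c : Fin k, Cond' (gsh g c) (hsh g h c) :=
    fun g h => key_exists_unique hk0 hn0 g h
  let I := {p : (Fin n → Fin k) × (Fin (k - 1) → Fin n) // p.1 ∘ σ = p.1 ∧ p.2 ∘ τ = p.2}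
  let G := {p : (Fin n → Fin k) × (Fin (k - 1) → Fin n) //
        (∀ i : Fin (k - 1),
          ((p.2 ∘ Tuple.sort p.2) i : ℕ) <
            (Finset.univ.filter fun m : Fin n => (p.1 m : ℕ) ≤ (i : ℕ)).card) ∧
        p.1 ∘ σ = p.1 ∧ p.2 ∘ τ = p.2}
  have hEquiv : I ≃ Fin k × G :=
  { toFun := fun p =>
      ⟨(key p.1.1 p.1.2).exists.choose,
       ⟨(gsh p.1.1 (key p.1.1 p.1.2).exists.choose,
         hsh p.1.1 p.1.2 (key p.1.1 p.1.2).exists.choose),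
        by
          refine ⟨(condiff _ _).mpr (key p.1.1 p.1.2).exists.choose_spec, ?_, ?_⟩
          · funext m
            have e := congrFun p.2.1 m
            simp only [Function.comp_apply] at e ⊢
            unfold gsh
            rw [e]
          · funext j
            have e := congrFun p.2.2 j
            simp only [Function.comp_apply] at e ⊢
            unfold hsh
            rw [e]⟩⟩,
    invFun := fun cp =>
      ⟨(fun m => cp.2.1.1 m - cp.1,
        fun j => cp.2.1.2 j - (sct (fun m => cp.2.1.1 m - cp.1) cp.1 : Fin n)),
       by
         constructor
         · funext m
           have e := congrFun cp.2.2.2.1 m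
           simp only [Function.comp_apply] at e ⊢
           rw [e]
         · funext j
           have e := congrFun cp.2.2.2.2 j
           simp only [Function.comp_apply] at e ⊢
           rw [e]⟩,
    left_inv := by
      intro p
      obtain ⟨⟨g, h⟩, hp⟩ := p
      apply Subtype.ext
      simp only
      have e1 : (fun m => gsh g ((key g h).exists.choose) m - ((key g h).exists.choose)) = g := by
        funext m
        exact fin_add_sub_cancel _ _
      rw [e1]
      refine Prod.ext rfl ?_
      funext j
      exact fin_add_sub_cancel _ _,
    right_inv := by
      intro cp
      obtain ⟨c, ⟨⟨g', h'⟩, hcond, hg', hh'⟩⟩ := cp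
      have e2 : gsh (fun m => g' m - c) c = g' := by
        funext m
        exact fin_sub_add_cancel _ _
      have e3 : hsh (fun m => g' m - c)
          (fun j => h' j - (sct (fun m => g' m - c) c : Fin n)) c = h' := by
        funext j
        exact fin_sub_add_cancel _ _
      have hc : (key (fun m => g' m - c)
          (fun j => h' j - (sct (fun m => g' m - c) c : Fin n))).exists.choose = c := by
        apply (key _ _).unique (key _ _).exists.choose_spec
        rw [e2, e3]
        exact (condiff g' h').mp hcond
      apply Prod.ext
      · exact hc
      · apply Subtype.ext
        simp only
        rw [hc, e2, e3] }
  have h1 : Nat.card I = k * Nat.card G := by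
    rw [Nat.card_congr hEquiv, Nat.card_prod]
    congr 1
    simp
  have h2 : Nat.card I = k ^ cσ * n ^ cτ := by
    have e : I ≃ {g : Fin n → Fin k // g ∘ σ = g} × {h : Fin (k - 1) → Fin n // h ∘ τ = h} :=
      { toFun := fun p => (⟨p.1.1, p.2.1⟩, ⟨p.1.2, p.2.2⟩),
        invFun := fun z => ⟨(z.1.1, z.2.1), z.1.2, z.2.2⟩,
        left_inv := fun p => rfl,
        right_inv := fun z => rfl }
    rw [Nat.card_congr e, Nat.card_prod, card_fixed_fun σ, card_fixed_fun τ]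
  have hpos : 0 < cσ := by
    rw [hcσ]
    haveI : Nonempty (MulAction.orbitRel.Quotient (Subgroup.zpowers σ) (Fin n)) :=
      ⟨Quotient.mk'' ⟨0, hn0⟩⟩
    exact Nat.card_pos
  have h3 : k * Nat.card G = k * (k ^ (cσ - 1) * n ^ cτ) := by
    rw [← h1, h2]
    have e : k ^ cσ = k * k ^ (cσ - 1) := by
      conv_lhs => rw [show cσ = (cσ - 1) + 1 from by omega]
      rw [pow_succ]
      ring
    rw [e]
    ring
  exact Nat.eq_of_mul_eq_mul_left hk0 h3
end

section
/- Fix natural numbers n ≥ 1 and k ≥ 0, and let σ be a permutation of Fin n. In the polynomial ring ℤ[X], the sum over all functions f : Fin n → Fin (k+1) satisfying f ∘ σ = f of X^(Σ_{m} (f m : ℕ)) equals the product, over all orbits O of the cyclic subgroup generated by σ acting on Fin n, of Σ_{j=0}^{k} X^(j · |O|). -/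
open scoped Classical in
/-- Character-value, area-weighted form of the Frobenius formula for labelled
north-east lattice paths from `(0,0)` to `(k,n)`: the sum over functions
`f : Fin n → Fin (k+1)` fixed by `σ` (i.e. `f ∘ σ = f`) of `X^(Σ_m f m)` equals
the product over the orbits `O` of `⟨σ⟩` on `Fin n` of `Σ_{j=0}^k X^(j·|O|)`. -/
theorem stmt10 (n k : ℕ) (hn : 1 ≤ n) (σ : Equiv.Perm (Fin n)) :
    ∑ f ∈ Finset.univ.filter (fun f : Fin n → Fin (k + 1) => f ∘ σ = f),
        (Polynomial.X : Polynomial ℤ) ^ (∑ m, (f m : ℕ)) =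
      ∏ᶠ O : MulAction.orbitRel.Quotient (Subgroup.zpowers σ) (Fin n),
        ∑ j ∈ Finset.range (k + 1),
          (Polynomial.X : Polynomial ℤ) ^ (j * Nat.card O.orbit) := by
  classical
  set Q := MulAction.orbitRel.Quotient (Subgroup.zpowers σ) (Fin n) with hQ
  -- RHS: finprod to finite product, range sum to Fin sum
  rw [finprod_eq_prod_of_fintype]
  have h1 : ∀ O : Q, ∑ j ∈ Finset.range (k+1),
      (Polynomial.X : Polynomial ℤ) ^ (j * Nat.card O.orbit)
      = ∑ j : Fin (k+1), (Polynomial.X : Polynomial ℤ) ^ ((j : ℕ) * Nat.card O.orbit) :=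
    fun O => (Fin.sum_univ_eq_sum_range
      (fun j => (Polynomial.X : Polynomial ℤ) ^ (j * Nat.card O.orbit)) (k+1)).symm
  simp_rw [h1]
  rw [Finset.prod_univ_sum]
  -- now RHS = ∑ g ∈ piFinset (fun _ => univ), ∏ O, X ^ (g O * card O.orbit)
  rw [Fintype.piFinset_univ]
  refine Finset.sum_bij' (i := fun f hf => fun O : Q =>
      Quotient.liftOn' O f ?_) (j := fun g _ => fun m => g (Quotient.mk'' m))
      ?_ ?_ ?_ ?_ ?_
  case refine_1 =>
    intro a b hab
    simp only [Finset.mem_filter] at hf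
    obtain ⟨⟨u, hu⟩, rfl⟩ := hab
    obtain ⟨z, rfl⟩ := hu
    -- f ((σ ^ z) • b) = f b
    have key : ∀ z : ℤ, ∀ x, f ((σ ^ z) x) = f x := by
      have h1 : ∀ x, f (σ x) = f x := fun x => congrFun hf.2 x
      have h2 : ∀ x, f (σ⁻¹ x) = f x := by
        intro x
        conv_rhs => rw [← Equiv.apply_symm_apply σ x]
        exact (h1 _).symm
      intro z
      induction z using Int.induction_on with
      | zero => simp
      | succ i ih => intro x; rw [zpow_add_one, Equiv.Perm.mul_apply, ih, h1]
      | pred i ih => intro x; rw [zpow_sub_one, Equiv.Perm.mul_apply, ih]; exact h2 x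
    exact key z b
  case refine_2 => intro f hf; exact Finset.mem_univ _
  case refine_3 =>
    intro g hg
    simp only [Finset.mem_filter, Finset.mem_univ, true_and]
    funext m
    simp only [Function.comp_apply]
    congr 1
    exact Quotient.sound' ⟨⟨σ, Subgroup.mem_zpowers σ⟩, rfl⟩
  case refine_4 =>
    intro f hf; funext m; rfl
  case refine_5 =>
    intro g hg; funext O
    induction O using Quotient.inductionOn' with
    | h m => rfl
  case refine_6 =>
    intro f hf
    simp only [Finset.mem_filter] at hf
    rw [Finset.prod_pow_eq_pow_sum]
    congr 1
    rw [← Equiv.sum_comp (MulAction.selfEquivSigmaOrbits' (Subgroup.zpowers σ) (Fin n)).symm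
      (fun m => (f m : ℕ)), ← Finset.univ_sigma_univ, Finset.sum_sigma]
    refine Finset.sum_congr rfl fun O _ => ?_
    induction O using Quotient.inductionOn' with
    | h m =>
      have key : ∀ z : ℤ, ∀ x, f ((σ ^ z) x) = f x := by
        have h1 : ∀ x, f (σ x) = f x := fun x => congrFun hf.2 x
        have h2 : ∀ x, f (σ⁻¹ x) = f x := by
          intro x
          conv_rhs => rw [← Equiv.apply_symm_apply σ x]
          exact (h1 _).symm
        intro z
        induction z using Int.induction_on with
        | zero => simp
        | succ i ih => intro x; rw [zpow_add_one, Equiv.Perm.mul_apply, ih, h1]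
        | pred i ih => intro x; rw [zpow_sub_one, Equiv.Perm.mul_apply, ih]; exact h2 x
      have hval : ∀ x : (MulAction.orbitRel.Quotient.orbit (Quotient.mk'' m : Q)),
          (f ((MulAction.selfEquivSigmaOrbits' (Subgroup.zpowers σ) (Fin n)).symm
            ⟨Quotient.mk'' m, x⟩) : ℕ) = (f m : ℕ) := by
        intro x
        have hx : (MulAction.selfEquivSigmaOrbits' (Subgroup.zpowers σ) (Fin n)).symm
            ⟨Quotient.mk'' m, x⟩ = (x : Fin n) := rfl
        rw [hx]
        obtain ⟨⟨u, hu⟩, hxe⟩ := x.2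
        obtain ⟨z, rfl⟩ := hu
        rw [← hxe]
        exact congrArg _ (key z m)
      rw [Finset.sum_congr rfl (fun x _ => hval x), Finset.sum_const, smul_eq_mul,
        Finset.card_univ, mul_comm, Nat.card_eq_fintype_card]
      rfl
end

section
/- Fix natural numbers k ≥ 1, n ≥ 1 and r ≥ 1. Let T be the set of functions A : Fin r → Fin k → Fin (n+1) such that each row A s is weakly increasing, and columns are strictly increasing: A s i < A t i whenever s < t. Then |T| equals the determinant of the r×r integer matrix M whose (i,j) entry (for i, j ∈ Fin r) is C(n + k + j − i, k + j − i) when k + j ≥ i, and 0 otherwise. -/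
open Finset

namespace S13

/-- Strictly monotone tuples correspond to finsets. -/
def smEquiv (a M : ℕ) : {h : Fin a → Fin M // StrictMono h} ≃ {s : Finset (Fin M) // s.card = a} where
  toFun h := ⟨Finset.univ.map ⟨h.1, h.2.injective⟩, by simp⟩
  invFun s := ⟨s.1.orderEmbOfFin s.2, (s.1.orderEmbOfFin s.2).strictMono⟩
  left_inv h := by
    apply Subtype.ext
    exact (Finset.orderEmbOfFin_unique _ (fun x => by simp) h.2).symm
  right_inv s := by
    apply Subtype.ext
    apply Finset.coe_injective
    rw [Finset.coe_map]
    simpa using Finset.range_orderEmbOfFin s.1 s.2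

lemma strictMono_ge {a M : ℕ} {h : Fin a → Fin M} (hh : StrictMono h) :
    ∀ j : ℕ, ∀ hj : j < a, j ≤ (h ⟨j, hj⟩ : ℕ) := by
  intro j
  induction j with
  | zero => intro; exact Nat.zero_le _
  | succ j ih =>
    intro hj
    have h1 := ih (by omega)
    have h2 : h ⟨j, by omega⟩ < h ⟨j+1, hj⟩ := hh (by simp [Fin.lt_def])
    omega

lemma strictMono_add {a M : ℕ} {h : Fin a → Fin M} (hh : StrictMono h) :
    ∀ d : ℕ, ∀ j : ℕ, ∀ hjd : j + d < a, (h ⟨j, by omega⟩ : ℕ) + d ≤ (h ⟨j + d, hjd⟩ : ℕ) := by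
  intro d
  induction d with
  | zero => intro j hj; simp
  | succ d ih =>
    intro j hjd
    have h1 := ih j (by omega)
    have h2 : h ⟨j + d, by omega⟩ < h ⟨j + d + 1, by omega⟩ := hh (by simp [Fin.lt_def])
    have h3 : (⟨j + (d + 1), hjd⟩ : Fin a) = ⟨j + d + 1, by omega⟩ := by apply Fin.ext; simp; omega
    rw [h3]
    simp only [Fin.lt_def] at h2
    omega

/-- Monotone tuples valued in `Fin (m+1)` correspond to strictly monotone tuples. -/
def mEquiv (a m : ℕ) : {g : Fin a → Fin (m+1) // Monotone g} ≃ {h : Fin a → Fin (a + m) // StrictMono h} where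
  toFun g := ⟨fun i => ⟨g.1 i + i, by have := (g.1 i).2; have := i.2; omega⟩, by
    intro i j hij
    have := g.2 hij.le
    simp only [Fin.lt_def, Fin.le_def] at *
    omega⟩
  invFun h := ⟨fun i => ⟨h.1 i - i, by
      have h0 := strictMono_ge h.2 i i.2
      have ha : 0 < a := i.pos
      have h1 := strictMono_add h.2 ((a - 1) - (i:ℕ)) i (by have := i.2; omega)
      have h2 := (h.1 ⟨(i:ℕ) + (a - 1 - (i:ℕ)), by have := i.2; omega⟩).2
      have h3 : (⟨(i:ℕ), by have := i.2; omega⟩ : Fin a) = i := by apply Fin.ext; simp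
      rw [h3] at h1
      simp only [Fin.eta] at h0
      omega⟩, by
    intro i j hij
    have h1 := strictMono_add h.2 ((j : ℕ) - i) i (by have := j.2; omega)
    have h2 : (⟨(i:ℕ) + ((j:ℕ) - (i:ℕ)), by have := j.2; omega⟩ : Fin a) = j := by
      apply Fin.ext; simp; omega
    rw [h2] at h1
    have h3 : (⟨(i:ℕ), by have := i.2; omega⟩ : Fin a) = i := by apply Fin.ext; simp
    rw [h3] at h1
    simp only [Fin.le_def, Fin.mk_le_mk] at *
    omega⟩
  left_inv g := by apply Subtype.ext; funext i; apply Fin.ext; simp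
  right_inv h := by
    apply Subtype.ext; funext i; apply Fin.ext
    have h0 := strictMono_ge h.2 i i.2
    simp only [Fin.eta] at h0
    simp; omega

lemma card_monotone (a m : ℕ) :
    Nat.card {g : Fin a → Fin (m+1) // Monotone g} = (a + m).choose a := by
  rw [Nat.card_congr ((mEquiv a m).trans (smEquiv a (a + m)))]
  rw [Nat.card_eq_fintype_card, Fintype.card_finset_len]
  simp

/-- Extended coordinate function of one path: start `a`, middle values `v`, end `b`. -/
def Xr (n a b : ℕ) {K : ℕ} (v : Fin n → Fin K) (y : ℕ) : ℕ :=
  if h : 1 ≤ y ∧ y ≤ n then (v ⟨y - 1, by omega⟩ : ℕ) else if y = 0 then a else b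

lemma Xr_zero (n a b : ℕ) {K : ℕ} (v : Fin n → Fin K) : Xr n a b v 0 = a := by simp [Xr]

lemma Xr_big (n a b : ℕ) {K : ℕ} (v : Fin n → Fin K) {y : ℕ} (hy : n + 1 ≤ y) :
    Xr n a b v y = b := by
  unfold Xr
  rw [dif_neg (by omega), if_neg (by omega)]

lemma Xr_mid (n a b : ℕ) {K : ℕ} (v : Fin n → Fin K) {y : ℕ} (h1 : 1 ≤ y) (h2 : y ≤ n) :
    Xr n a b v y = (v ⟨y - 1, by omega⟩ : ℕ) := by
  unfold Xr
  rw [dif_pos ⟨h1, h2⟩]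

lemma monotone_Xr_iff (n a b : ℕ) {K : ℕ} (v : Fin n → Fin K) :
    Monotone (Xr n a b v) ↔
      (Monotone v ∧ (∀ m : Fin n, a ≤ (v m : ℕ) ∧ (v m : ℕ) ≤ b) ∧ a ≤ b) := by
  constructor
  · intro h
    refine ⟨?_, ?_, ?_⟩
    · intro i j hij
      have := h (show (i:ℕ)+1 ≤ (j:ℕ)+1 from Nat.add_le_add_right hij 1)
      rw [Xr_mid n a b v (by omega) (by have := i.2; omega),
          Xr_mid n a b v (by omega) (by have := j.2; omega)] at this
      simpa using this
    · intro m
      constructor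
      · have := h (show 0 ≤ (m:ℕ)+1 by omega)
        rwa [Xr_zero, Xr_mid n a b v (by omega) (by have := m.2; omega)] at this
      · have := h (show (m:ℕ)+1 ≤ n+1 by have := m.2; omega)
        rwa [Xr_mid n a b v (by omega) (by have := m.2; omega), Xr_big n a b v (by omega)] at this
    · have := h (show 0 ≤ n+1 by omega)
      rwa [Xr_zero, Xr_big n a b v (by omega)] at this
  · rintro ⟨h1, h2, h3⟩
    intro y y' hyy
    rcases Nat.eq_zero_or_pos y with rfl | hy0
    · rw [Xr_zero]
      rcases Nat.eq_zero_or_pos y' with rfl | hy'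
      · rw [Xr_zero]
      · rcases le_or_gt y' n with hl | hl
        · rw [Xr_mid n a b v hy' hl]; exact (h2 _).1
        · rw [Xr_big n a b v (by omega)]; exact h3
    · rcases le_or_gt y n with hl | hl
      · rw [Xr_mid n a b v hy0 hl]
        rcases le_or_gt y' n with hl' | hl'
        · rw [Xr_mid n a b v (by omega) hl']
          have := h1 (show (⟨y-1, by omega⟩ : Fin n) ≤ ⟨y'-1, by omega⟩ from
            Fin.mk_le_mk.2 (by omega))
          exact this
        · rw [Xr_big n a b v (by omega)]; exact (h2 _).2
      · rw [Xr_big n a b v (by omega), Xr_big n a b v (by omega)]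

/-- Counting monotone extended paths with prescribed endpoints. -/
lemma card_row (n a b K : ℕ) (hb : b < K) :
    Nat.card {v : Fin n → Fin K // Monotone (Xr n a b v)} =
      if a ≤ b then (n + b - a).choose (b - a) else 0 := by
  rcases le_or_gt a b with hab | hab
  · rw [if_pos hab]
    have bd1 : ∀ v : {v : Fin n → Fin K // Monotone (Xr n a b v)}, ∀ m : Fin n,
        a ≤ (v.1 m : ℕ) ∧ (v.1 m : ℕ) ≤ b := fun v => ((monotone_Xr_iff n a b v.1).1 v.2).2.1
    have e : {v : Fin n → Fin K // Monotone (Xr n a b v)} ≃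
        {g : Fin n → Fin (b - a + 1) // Monotone g} :=
      { toFun := fun v => ⟨fun m => ⟨(v.1 m : ℕ) - a, by have := bd1 v m; omega⟩, by
          intro i j hij
          have h1 := ((monotone_Xr_iff n a b v.1).1 v.2).1 hij
          have h2 := bd1 v i
          simp only [Fin.le_def] at h1 ⊢
          omega⟩
        invFun := fun g => ⟨fun m => ⟨(g.1 m : ℕ) + a, by have := (g.1 m).2; omega⟩, by
          rw [monotone_Xr_iff]
          refine ⟨?_, fun m => ⟨by simp, ?_⟩, hab⟩
          · intro i j hij
            have := g.2 hij
            simp only [Fin.le_def] at this ⊢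
            omega
          · have := (g.1 m).2
            simp only
            omega⟩
        left_inv := fun v => by
          apply Subtype.ext
          funext m
          apply Fin.ext
          have := bd1 v m
          simp only
          omega
        right_inv := fun g => by
          apply Subtype.ext
          funext m
          apply Fin.ext
          simp only
          have := (g.1 m).2
          omega }
    rw [Nat.card_congr e, card_monotone]
    have h1 : n + b - a = n + (b - a) := by omega
    rw [h1, ← Nat.choose_symm (Nat.le_add_right n (b - a))]
    congr 1
    omega
  · rw [if_neg (by omega)]
    simp only [Nat.card_eq_zero]
    left
    constructor
    intro v
    have := (monotone_Xr_iff n a b v.1).1 v.2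
    omega

/-! ## Path systems -/

variable (k n r : ℕ)

/-- Coordinate function of path `s` in the system `(σ, V)`. -/
def XX (σ : Equiv.Perm (Fin r)) (V : Fin r → Fin n → Fin (k + r)) (s : Fin r) : ℕ → ℕ :=
  Xr n (s : ℕ) (k + (σ s : ℕ)) (V s)

/-- Validity of a path system. -/
def Ok (σ : Equiv.Perm (Fin r)) (V : Fin r → Fin n → Fin (k + r)) : Prop :=
  ∀ s, Monotone (XX k n r σ V s)

/-- Paths `s` and `t` share a lattice point at level `y`. -/
def Ov (σ : Equiv.Perm (Fin r)) (V : Fin r → Fin n → Fin (k + r)) (s t : Fin r) (y : ℕ) : Prop :=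
  XX k n r σ V s y ≤ XX k n r σ V t (y + 1) ∧ XX k n r σ V t y ≤ XX k n r σ V s (y + 1)

/-- The system has two distinct paths sharing a lattice point. -/
def Cross (σ : Equiv.Perm (Fin r)) (V : Fin r → Fin n → Fin (k + r)) : Prop :=
  ∃ y : ℕ, ∃ s t : Fin r, s ≠ t ∧ Ov k n r σ V s t y

variable {k n r}

lemma XX_zero (σ : Equiv.Perm (Fin r)) (V : Fin r → Fin n → Fin (k + r)) (s : Fin r) :
    XX k n r σ V s 0 = s := Xr_zero _ _ _ _

lemma XX_big (σ : Equiv.Perm (Fin r)) (V : Fin r → Fin n → Fin (k + r)) (s : Fin r) {y : ℕ}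
    (hy : n + 1 ≤ y) : XX k n r σ V s y = k + σ s := Xr_big _ _ _ _ hy

lemma XX_lb {σ : Equiv.Perm (Fin r)} {V : Fin r → Fin n → Fin (k + r)} (h : Ok k n r σ V)
    (s : Fin r) (y : ℕ) : (s : ℕ) ≤ XX k n r σ V s y := by
  have := h s (Nat.zero_le y)
  rwa [XX_zero] at this

lemma XX_ub {σ : Equiv.Perm (Fin r)} {V : Fin r → Fin n → Fin (k + r)} (h : Ok k n r σ V)
    (s : Fin r) (y : ℕ) : XX k n r σ V s y ≤ k + σ s := by
  have := h s (Nat.le_add_left y (n + 1))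
  rwa [XX_big σ V s (Nat.le_add_right _ _)] at this

lemma Ov_le_n {σ : Equiv.Perm (Fin r)} {V : Fin r → Fin n → Fin (k + r)}
    {s t : Fin r} {y : ℕ} (hst : s ≠ t) (ho : Ov k n r σ V s t y) : y ≤ n := by
  by_contra hy
  rcases ho with ⟨h1, h2⟩
  rw [XX_big σ V s (by omega), XX_big σ V t (by omega)] at h1
  rw [XX_big σ V t (by omega), XX_big σ V s (by omega)] at h2
  have : σ s = σ t := Fin.ext (by omega)
  exact hst (σ.injective this)

/-- Counting all valid systems over a fixed permutation. -/
lemma card_ok (σ : Equiv.Perm (Fin r)) :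
    Nat.card {V : Fin r → Fin n → Fin (k + r) // Ok k n r σ V} =
      ∏ s : Fin r,
        (if (s : ℕ) ≤ k + (σ s : ℕ) then
          (n + (k + (σ s : ℕ)) - s).choose (k + (σ s : ℕ) - s) else 0) := by
  have e0 : {V : Fin r → Fin n → Fin (k + r) // Ok k n r σ V} ≃
      {V : Fin r → Fin n → Fin (k + r) //
        ∀ s : Fin r, Monotone (Xr n (s : ℕ) (k + (σ s : ℕ)) (V s))} :=
    Equiv.subtypeEquivRight fun V => Iff.rfl
  rw [Nat.card_congr (e0.trans (Equiv.subtypePiEquivPi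
    (p := fun (s : Fin r) (v : Fin n → Fin (k + r)) =>
      Monotone (Xr n (s : ℕ) (k + (σ s : ℕ)) v)))), Nat.card_pi]
  refine Finset.prod_congr rfl fun s _ => ?_
  exact card_row n s (k + σ s) (k + r) (by have := (σ s).2; omega)

variable (k n r) in
/-- Strict separation of the paths of a system. -/
def Sep (σ : Equiv.Perm (Fin r)) (V : Fin r → Fin n → Fin (k + r)) : Prop :=
  ∀ s t : Fin r, s < t → ∀ y : ℕ, y ≤ n → XX k n r σ V s (y + 1) < XX k n r σ V t y

lemma sep_of_noncross {σ : Equiv.Perm (Fin r)} {V : Fin r → Fin n → Fin (k + r)}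
    (h : Ok k n r σ V) (hnc : ¬ Cross k n r σ V) : Sep k n r σ V := by
  intro s t hst y
  induction y with
  | zero =>
    intro _
    by_contra hc
    push_neg at hc
    refine hnc ⟨0, s, t, hst.ne, ?_, hc⟩
    calc XX k n r σ V s 0 = (s : ℕ) := XX_zero σ V s
    _ ≤ (t : ℕ) := hst.le
    _ = XX k n r σ V t 0 := (XX_zero σ V t).symm
    _ ≤ XX k n r σ V t 1 := h t (by omega)
  | succ y ih =>
    intro hy
    by_contra hc
    push_neg at hc
    refine hnc ⟨y + 1, s, t, hst.ne, le_of_lt ?_, hc⟩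
    calc XX k n r σ V s (y + 1) < XX k n r σ V t y := ih (by omega)
    _ ≤ XX k n r σ V t (y + 1 + 1) := h t (by omega)

lemma perm_eq_one_of_noncross {σ : Equiv.Perm (Fin r)} {V : Fin r → Fin n → Fin (k + r)}
    (h : Ok k n r σ V) (hnc : ¬ Cross k n r σ V) : σ = 1 := by
  have hsep := sep_of_noncross h hnc
  have hsm : StrictMono σ := by
    intro s t hst
    have h1 := hsep s t hst n le_rfl
    have h2 : XX k n r σ V t n ≤ XX k n r σ V t (n + 1) := h t (by omega)
    rw [XX_big σ V s le_rfl, XX_big σ V t le_rfl] at *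
    simp only [Fin.lt_def]
    omega
  have hsm' : StrictMono σ.symm := fun s t hst => by
    rcases lt_trichotomy (σ.symm s) (σ.symm t) with h' | h' | h'
    · exact h'
    · exact absurd (congrArg σ h') (by simp; omega)
    · have := hsm h'
      simp only [Equiv.apply_symm_apply] at this
      omega
  apply Equiv.ext
  intro s
  have h1 : (s : ℕ) ≤ σ s := strictMono_ge hsm s s.2
  have h3 : ((σ s : Fin r) : ℕ) ≤ (s : ℕ) := by
    simpa using strictMono_ge hsm' (σ s) (σ s).2
  simp only [Equiv.Perm.coe_one, id_eq]
  exact Fin.ext (le_antisymm h3 h1)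

lemma noncross_of_sep {σ : Equiv.Perm (Fin r)} {V : Fin r → Fin n → Fin (k + r)}
    (h : Ok k n r σ V) (hsep : Sep k n r σ V) : ¬ Cross k n r σ V := by
  rintro ⟨y, s, t, hst, ho⟩
  have hy : y ≤ n := Ov_le_n hst ho
  rcases lt_or_gt_of_ne hst with hlt | hgt
  · exact absurd ho.2 (by have := hsep s t hlt y hy; omega)
  · exact absurd ho.1 (by have := hsep t s hgt y hy; omega)

/-! ## The tail-swapping involution -/

section Invol

variable (σ : Equiv.Perm (Fin r)) (V : Fin r → Fin n → Fin (k + r))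

/-- Lowest level at which two paths share a point. -/
noncomputable def ystar : ℕ := sInf {y | ∃ s t : Fin r, s ≠ t ∧ Ov k n r σ V s t y}

/-- `x` is on path `s` at level `ystar`. -/
def onP (s : Fin r) (x : ℕ) : Prop :=
  XX k n r σ V s (ystar σ V) ≤ x ∧ x ≤ XX k n r σ V s (ystar σ V + 1)

/-- Least shared `x`-coordinate at level `ystar`. -/
noncomputable def xstar : ℕ :=
  sInf {x | ∃ s t : Fin r, s ≠ t ∧ onP σ V s x ∧ onP σ V t x}

noncomputable def sstarN : ℕ := sInf {u | ∃ hu : u < r, onP σ V ⟨u, hu⟩ (xstar σ V)}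

noncomputable def tstarN : ℕ :=
  sInf {u | u ≠ sstarN σ V ∧ ∃ hu : u < r, onP σ V ⟨u, hu⟩ (xstar σ V)}

variable {σ V}

section withHyp

variable (h : Ok k n r σ V) (hc : Cross k n r σ V)

include h hc

lemma ystar_spec :
    ∃ s t : Fin r, s ≠ t ∧ Ov k n r σ V s t (ystar σ V) := by
  have hne : {y | ∃ s t : Fin r, s ≠ t ∧ Ov k n r σ V s t y}.Nonempty := by
    obtain ⟨y, s, t, hst, ho⟩ := hc
    exact ⟨y, s, t, hst, ho⟩
  exact Nat.sInf_mem hne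

lemma ystar_le_n : ystar σ V ≤ n := by
  obtain ⟨s, t, hst, ho⟩ := ystar_spec h hc
  exact Ov_le_n hst ho

lemma ystar_min {y : ℕ} (hy : y < ystar σ V) :
    ¬ ∃ s t : Fin r, s ≠ t ∧ Ov k n r σ V s t y :=
  Nat.notMem_of_lt_sInf hy

lemma xstar_spec :
    ∃ s t : Fin r, s ≠ t ∧ onP σ V s (xstar σ V) ∧ onP σ V t (xstar σ V) := by
  obtain ⟨s, t, hst, ho⟩ := ystar_spec h hc
  have hne : {x | ∃ s t : Fin r, s ≠ t ∧ onP σ V s x ∧ onP σ V t x}.Nonempty := by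
    refine ⟨max (XX k n r σ V s (ystar σ V)) (XX k n r σ V t (ystar σ V)),
      s, t, hst, ?_, ?_⟩
    · exact ⟨le_max_left _ _, max_le (h s (by omega)) ho.2⟩
    · exact ⟨le_max_right _ _, max_le ho.1 (h t (by omega))⟩
  exact Nat.sInf_mem hne

lemma xstar_min {x : ℕ} (hx : x < xstar σ V) :
    ¬ ∃ s t : Fin r, s ≠ t ∧ onP σ V s x ∧ onP σ V t x :=
  Nat.notMem_of_lt_sInf hx

lemma sstarN_spec :
    ∃ hu : sstarN σ V < r, onP σ V ⟨sstarN σ V, hu⟩ (xstar σ V) := by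
  obtain ⟨s, t, hst, h1, h2⟩ := xstar_spec h hc
  have hne : {u | ∃ hu : u < r, onP σ V ⟨u, hu⟩ (xstar σ V)}.Nonempty :=
    ⟨(s : ℕ), s.2, by simpa using h1⟩
  exact Nat.sInf_mem hne

lemma tstarN_spec :
    tstarN σ V ≠ sstarN σ V ∧
      ∃ hu : tstarN σ V < r, onP σ V ⟨tstarN σ V, hu⟩ (xstar σ V) := by
  obtain ⟨s, t, hst, h1, h2⟩ := xstar_spec h hc
  have : {u | u ≠ sstarN σ V ∧ ∃ hu : u < r, onP σ V ⟨u, hu⟩ (xstar σ V)}.Nonempty := by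
    rcases eq_or_ne (s : ℕ) (sstarN σ V) with he | he
    · refine ⟨(t : ℕ), ?_, t.2, by simpa using h2⟩
      intro ht
      exact hst (Fin.ext (by omega))
    · exact ⟨(s : ℕ), he, s.2, by simpa using h1⟩
  exact Nat.sInf_mem this

/-- The first of the two swapped paths. -/
noncomputable def sstar : Fin r := ⟨sstarN σ V, (sstarN_spec h hc).1⟩

/-- The second of the two swapped paths. -/
noncomputable def tstar : Fin r := ⟨tstarN σ V, (tstarN_spec h hc).2.1⟩

lemma sstar_on : onP σ V (sstar h hc) (xstar σ V) := (sstarN_spec h hc).2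

lemma tstar_on : onP σ V (tstar h hc) (xstar σ V) := (tstarN_spec h hc).2.2

lemma sstar_ne_tstar : sstar h hc ≠ tstar h hc := by
  have := (tstarN_spec h hc).1
  intro he
  exact this (by simpa [sstar, tstar] using congrArg Fin.val he.symm)

lemma sstar_min {u : Fin r} (hu : onP σ V u (xstar σ V)) : sstarN σ V ≤ (u : ℕ) :=
  Nat.sInf_le ⟨u.2, by simpa using hu⟩

lemma tstar_min {u : Fin r} (hne : (u : ℕ) ≠ sstarN σ V) (hu : onP σ V u (xstar σ V)) :
    tstarN σ V ≤ (u : ℕ) :=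
  Nat.sInf_le ⟨hne, u.2, by simpa using hu⟩

end withHyp

/-- Splice two rows at level `y0`. -/
def spl (v w : Fin n → Fin (k + r)) (y0 : ℕ) : Fin n → Fin (k + r) :=
  fun m => if (m : ℕ) + 1 ≤ y0 then v m else w m

lemma spl_spl (v w : Fin n → Fin (k + r)) (y0 : ℕ) :
    spl (spl v w y0) (spl w v y0) y0 = v := by
  funext m
  unfold spl
  by_cases hm : (m : ℕ) + 1 ≤ y0 <;> simp [hm]

variable (h : Ok k n r σ V) (hc : Cross k n r σ V)

/-- The swapped permutation. -/
noncomputable def nσ : Equiv.Perm (Fin r) := σ * Equiv.swap (sstar h hc) (tstar h hc)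

/-- The swapped family of paths. -/
noncomputable def nV : Fin r → Fin n → Fin (k + r) := fun u =>
  if u = sstar h hc then spl (V (sstar h hc)) (V (tstar h hc)) (ystar σ V)
  else if u = tstar h hc then spl (V (tstar h hc)) (V (sstar h hc)) (ystar σ V)
  else V u

lemma XX_nV_other {u : Fin r} (hu1 : u ≠ sstar h hc) (hu2 : u ≠ tstar h hc) :
    XX k n r (nσ h hc) (nV h hc) u = XX k n r σ V u := by
  unfold XX nσ nV
  rw [if_neg hu1, if_neg hu2]
  simp [Equiv.swap_apply_of_ne_of_ne hu1 hu2]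

lemma XX_nV_sstar (y : ℕ) :
    XX k n r (nσ h hc) (nV h hc) (sstar h hc) y =
      if y ≤ ystar σ V then XX k n r σ V (sstar h hc) y
      else XX k n r σ V (tstar h hc) y := by
  have hys : ystar σ V ≤ n := ystar_le_n h hc
  have hperm : (nσ h hc) (sstar h hc) = σ (tstar h hc) := by
    simp [nσ, Equiv.swap_apply_left]
  unfold XX
  rw [show nV h hc (sstar h hc) = spl (V (sstar h hc)) (V (tstar h hc)) (ystar σ V) by
    simp [nV]]
  rw [hperm]
  rcases Nat.eq_zero_or_pos y with rfl | hy0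
  · rw [Xr_zero, if_pos (Nat.zero_le _), Xr_zero]
  · rcases le_or_gt y n with hyn | hyn
    · rw [Xr_mid _ _ _ _ hy0 hyn]
      by_cases hy : y ≤ ystar σ V
      · rw [if_pos hy, Xr_mid _ _ _ _ hy0 hyn]
        show ((spl (V (sstar h hc)) (V (tstar h hc)) (ystar σ V)) ⟨y - 1, by omega⟩ : ℕ) = _
        rw [spl, if_pos (by simp; omega)]
      · rw [if_neg hy, Xr_mid _ _ _ _ hy0 hyn]
        show ((spl (V (sstar h hc)) (V (tstar h hc)) (ystar σ V)) ⟨y - 1, by omega⟩ : ℕ) = _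
        rw [spl, if_neg (by simp; omega)]
    · rw [Xr_big _ _ _ _ (by omega), if_neg (by omega), Xr_big _ _ _ _ (by omega)]

lemma XX_nV_tstar (y : ℕ) :
    XX k n r (nσ h hc) (nV h hc) (tstar h hc) y =
      if y ≤ ystar σ V then XX k n r σ V (tstar h hc) y
      else XX k n r σ V (sstar h hc) y := by
  have hys : ystar σ V ≤ n := ystar_le_n h hc
  have hperm : (nσ h hc) (tstar h hc) = σ (sstar h hc) := by
    simp [nσ, Equiv.swap_apply_right]
  unfold XX
  rw [show nV h hc (tstar h hc) = spl (V (tstar h hc)) (V (sstar h hc)) (ystar σ V) by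
    simp [nV, if_neg (Ne.symm (sstar_ne_tstar h hc)), (sstar_ne_tstar h hc).symm]]
  rw [hperm]
  rcases Nat.eq_zero_or_pos y with rfl | hy0
  · rw [Xr_zero, if_pos (Nat.zero_le _), Xr_zero]
  · rcases le_or_gt y n with hyn | hyn
    · rw [Xr_mid _ _ _ _ hy0 hyn]
      by_cases hy : y ≤ ystar σ V
      · rw [if_pos hy, Xr_mid _ _ _ _ hy0 hyn]
        show ((spl (V (tstar h hc)) (V (sstar h hc)) (ystar σ V)) ⟨y - 1, by omega⟩ : ℕ) = _
        rw [spl, if_pos (by simp; omega)]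
      · rw [if_neg hy, Xr_mid _ _ _ _ hy0 hyn]
        show ((spl (V (tstar h hc)) (V (sstar h hc)) (ystar σ V)) ⟨y - 1, by omega⟩ : ℕ) = _
        rw [spl, if_neg (by simp; omega)]
    · rw [Xr_big _ _ _ _ (by omega), if_neg (by omega), Xr_big _ _ _ _ (by omega)]

lemma XX_low (u : Fin r) {y : ℕ} (hy : y ≤ ystar σ V) :
    XX k n r (nσ h hc) (nV h hc) u y = XX k n r σ V u y := by
  by_cases h1 : u = sstar h hc
  · rw [h1, XX_nV_sstar h hc, if_pos hy]
  · by_cases h2 : u = tstar h hc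
    · rw [h2, XX_nV_tstar h hc, if_pos hy]
    · rw [XX_nV_other h hc h1 h2]

lemma ok' : Ok k n r (nσ h hc) (nV h hc) := by
  intro u
  by_cases h1 : u = sstar h hc
  · have hfe : XX k n r (nσ h hc) (nV h hc) (sstar h hc) = fun y =>
        if y ≤ ystar σ V then XX k n r σ V (sstar h hc) y
        else XX k n r σ V (tstar h hc) y := funext (XX_nV_sstar h hc)
    rw [h1, hfe]
    intro y y' hyy
    simp only
    by_cases hy : y ≤ ystar σ V <;> by_cases hy' : y' ≤ ystar σ V <;>
      simp only [hy, hy', if_true, if_false, if_pos, if_neg]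
    · exact h _ hyy
    · calc XX k n r σ V (sstar h hc) y ≤ XX k n r σ V (sstar h hc) (ystar σ V) := h _ hy
      _ ≤ xstar σ V := (sstar_on h hc).1
      _ ≤ XX k n r σ V (tstar h hc) (ystar σ V + 1) := (tstar_on h hc).2
      _ ≤ XX k n r σ V (tstar h hc) y' := h _ (by omega)
    · omega
    · exact h _ hyy
  · by_cases h2 : u = tstar h hc
    · have hfe : XX k n r (nσ h hc) (nV h hc) (tstar h hc) = fun y =>
          if y ≤ ystar σ V then XX k n r σ V (tstar h hc) y
          else XX k n r σ V (sstar h hc) y := funext (XX_nV_tstar h hc)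
      rw [h2, hfe]
      intro y y' hyy
      simp only
      by_cases hy : y ≤ ystar σ V <;> by_cases hy' : y' ≤ ystar σ V <;>
        simp only [hy, hy', if_true, if_false, if_pos, if_neg]
      · exact h _ hyy
      · calc XX k n r σ V (tstar h hc) y ≤ XX k n r σ V (tstar h hc) (ystar σ V) := h _ hy
        _ ≤ xstar σ V := (tstar_on h hc).1
        _ ≤ XX k n r σ V (sstar h hc) (ystar σ V + 1) := (sstar_on h hc).2
        _ ≤ XX k n r σ V (sstar h hc) y' := h _ (by omega)
      · omega
      · exact h _ hyy
    · rw [XX_nV_other h hc h1 h2]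
      exact h u

lemma ov' : Ov k n r (nσ h hc) (nV h hc) (sstar h hc) (tstar h hc) (ystar σ V) := by
  constructor
  · rw [XX_nV_sstar h hc, XX_nV_tstar h hc, if_pos le_rfl, if_neg (by omega)]
    exact h _ (by omega)
  · rw [XX_nV_tstar h hc, XX_nV_sstar h hc, if_pos le_rfl, if_neg (by omega)]
    exact h _ (by omega)

lemma cross' : Cross k n r (nσ h hc) (nV h hc) :=
  ⟨ystar σ V, sstar h hc, tstar h hc, sstar_ne_tstar h hc, ov' h hc⟩

lemma ystar_eq : ystar (nσ h hc) (nV h hc) = ystar σ V := by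
  apply le_antisymm
  · exact Nat.sInf_le ⟨sstar h hc, tstar h hc, sstar_ne_tstar h hc, ov' h hc⟩
  · by_contra hlt
    push_neg at hlt
    obtain ⟨s, t, hst, ho⟩ := ystar_spec (ok' h hc) (cross' h hc)
    unfold Ov at ho
    rw [XX_low h hc s (by omega), XX_low h hc t (by omega), XX_low h hc t (by omega),
      XX_low h hc s (by omega)] at ho
    exact ystar_min h hc hlt ⟨s, t, hst, ho⟩

lemma onP_other' {u : Fin r} (h1 : u ≠ sstar h hc) (h2 : u ≠ tstar h hc) (x : ℕ) :
    onP (nσ h hc) (nV h hc) u x ↔ onP σ V u x := by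
  unfold onP
  rw [ystar_eq h hc, XX_nV_other h hc h1 h2]

lemma onP_new_s {x : ℕ} (hx : onP (nσ h hc) (nV h hc) (sstar h hc) x) :
    (x ≤ xstar σ V → onP σ V (sstar h hc) x) ∧
      (xstar σ V ≤ x → onP σ V (tstar h hc) x) := by
  unfold onP at hx ⊢
  rw [ystar_eq h hc, XX_nV_sstar h hc, XX_nV_sstar h hc, if_pos le_rfl,
    if_neg (by omega)] at hx
  exact ⟨fun hxx => ⟨hx.1, le_trans hxx (sstar_on h hc).2⟩,
    fun hxx => ⟨le_trans (tstar_on h hc).1 hxx, hx.2⟩⟩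

lemma onP_new_t {x : ℕ} (hx : onP (nσ h hc) (nV h hc) (tstar h hc) x) :
    (x ≤ xstar σ V → onP σ V (tstar h hc) x) ∧
      (xstar σ V ≤ x → onP σ V (sstar h hc) x) := by
  unfold onP at hx ⊢
  rw [ystar_eq h hc, XX_nV_tstar h hc, XX_nV_tstar h hc, if_pos le_rfl,
    if_neg (by omega)] at hx
  exact ⟨fun hxx => ⟨hx.1, le_trans hxx (tstar_on h hc).2⟩,
    fun hxx => ⟨le_trans (sstar_on h hc).1 hxx, hx.2⟩⟩

lemma onP_new_s_xs : onP (nσ h hc) (nV h hc) (sstar h hc) (xstar σ V) := by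
  unfold onP
  rw [ystar_eq h hc, XX_nV_sstar h hc, XX_nV_sstar h hc, if_pos le_rfl, if_neg (by omega)]
  exact ⟨(sstar_on h hc).1, (tstar_on h hc).2⟩

lemma onP_new_t_xs : onP (nσ h hc) (nV h hc) (tstar h hc) (xstar σ V) := by
  unfold onP
  rw [ystar_eq h hc, XX_nV_tstar h hc, XX_nV_tstar h hc, if_pos le_rfl, if_neg (by omega)]
  exact ⟨(tstar_on h hc).1, (sstar_on h hc).2⟩

lemma xstar_eq : xstar (nσ h hc) (nV h hc) = xstar σ V := by
  apply le_antisymm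
  · exact Nat.sInf_le ⟨sstar h hc, tstar h hc, sstar_ne_tstar h hc,
      onP_new_s_xs h hc, onP_new_t_xs h hc⟩
  · by_contra hlt
    push_neg at hlt
    obtain ⟨u, w, huw, h1, h2⟩ := xstar_spec (ok' h hc) (cross' h hc)
    have conv : ∀ u : Fin r, onP (nσ h hc) (nV h hc) u (xstar (nσ h hc) (nV h hc)) →
        onP σ V u (xstar (nσ h hc) (nV h hc)) := by
      intro u hu
      by_cases e1 : u = sstar h hc
      · rw [e1] at hu ⊢
        exact (onP_new_s h hc hu).1 (le_of_lt hlt)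
      · by_cases e2 : u = tstar h hc
        · rw [e2] at hu ⊢
          exact (onP_new_t h hc hu).1 (le_of_lt hlt)
        · exact (onP_other' h hc e1 e2 _).1 hu
    exact xstar_min h hc hlt ⟨u, w, huw, conv u h1, conv w h2⟩

lemma onP_xs_iff (u : Fin r) :
    onP (nσ h hc) (nV h hc) u (xstar σ V) ↔ onP σ V u (xstar σ V) := by
  by_cases e1 : u = sstar h hc
  · rw [e1]
    exact iff_of_true (onP_new_s_xs h hc) (sstar_on h hc)
  · by_cases e2 : u = tstar h hc
    · rw [e2]
      exact iff_of_true (onP_new_t_xs h hc) (tstar_on h hc)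
    · exact onP_other' h hc e1 e2 _

lemma sstarN_eq : sstarN (nσ h hc) (nV h hc) = sstarN σ V := by
  unfold sstarN
  rw [xstar_eq h hc]
  congr 1
  ext u
  simp only [Set.mem_setOf_eq]
  constructor
  · rintro ⟨hu, hon⟩
    exact ⟨hu, (onP_xs_iff h hc _).1 hon⟩
  · rintro ⟨hu, hon⟩
    exact ⟨hu, (onP_xs_iff h hc _).2 hon⟩

lemma tstarN_eq : tstarN (nσ h hc) (nV h hc) = tstarN σ V := by
  unfold tstarN
  rw [xstar_eq h hc, sstarN_eq h hc]
  congr 1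
  ext u
  simp only [Set.mem_setOf_eq]
  constructor
  · rintro ⟨hne, hu, hon⟩
    exact ⟨hne, hu, (onP_xs_iff h hc _).1 hon⟩
  · rintro ⟨hne, hu, hon⟩
    exact ⟨hne, hu, (onP_xs_iff h hc _).2 hon⟩

lemma sstar_eq : sstar (ok' h hc) (cross' h hc) = sstar h hc :=
  Fin.ext (sstarN_eq h hc)

lemma tstar_eq : tstar (ok' h hc) (cross' h hc) = tstar h hc :=
  Fin.ext (tstarN_eq h hc)

lemma nσ_invol : nσ (ok' h hc) (cross' h hc) = σ := by
  show nσ h hc * Equiv.swap (sstar (ok' h hc) (cross' h hc)) (tstar (ok' h hc) (cross' h hc)) = σ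
  rw [sstar_eq h hc, tstar_eq h hc]
  show σ * Equiv.swap (sstar h hc) (tstar h hc) * Equiv.swap (sstar h hc) (tstar h hc) = σ
  rw [mul_assoc, Equiv.swap_mul_self, mul_one]

lemma nV_invol : nV (ok' h hc) (cross' h hc) = V := by
  funext u
  show (if u = sstar (ok' h hc) (cross' h hc) then
      spl (nV h hc (sstar (ok' h hc) (cross' h hc))) (nV h hc (tstar (ok' h hc) (cross' h hc)))
        (ystar (nσ h hc) (nV h hc))
    else if u = tstar (ok' h hc) (cross' h hc) then
      spl (nV h hc (tstar (ok' h hc) (cross' h hc))) (nV h hc (sstar (ok' h hc) (cross' h hc)))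
        (ystar (nσ h hc) (nV h hc))
    else nV h hc u) = V u
  rw [sstar_eq h hc, tstar_eq h hc, ystar_eq h hc]
  have ev1 : nV h hc (sstar h hc) = spl (V (sstar h hc)) (V (tstar h hc)) (ystar σ V) := by
    simp [nV]
  have ev2 : nV h hc (tstar h hc) = spl (V (tstar h hc)) (V (sstar h hc)) (ystar σ V) := by
    simp [nV, (sstar_ne_tstar h hc).symm]
  by_cases h1 : u = sstar h hc
  · rw [if_pos h1, ev1, ev2, spl_spl, h1]
  · by_cases h2 : u = tstar h hc
    · rw [if_neg h1, if_pos h2, ev1, ev2, spl_spl, h2]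
    · rw [if_neg h1, if_neg h2]
      simp [nV, h1, h2]

lemma sign_nσ : Equiv.Perm.sign (nσ h hc) = - Equiv.Perm.sign σ := by
  rw [nσ, Equiv.Perm.sign_mul, Equiv.Perm.sign_swap (sstar_ne_tstar h hc), mul_neg_one]

lemma nσ_ne : nσ h hc ≠ σ := by
  intro he
  have h1 : σ * Equiv.swap (sstar h hc) (tstar h hc) = σ * 1 := by
    rw [mul_one]; exact he
  have h2 := mul_left_cancel h1
  exact sstar_ne_tstar h hc (Equiv.swap_eq_one_iff.1 h2)

end Invol

/-! ## The bijection with tableaux -/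

section Bij

lemma card_ge (N c : ℕ) :
    (Finset.univ.filter fun m : Fin N => c ≤ (m : ℕ)).card = N - c := by
  rcases le_or_gt N c with hc | hc
  · rw [Finset.filter_false_of_mem (fun m _ => by have := m.2; omega)]
    simp
    omega
  · have he : (Finset.univ.filter fun m : Fin N => c ≤ (m : ℕ)) = Finset.Ici ⟨c, hc⟩ := by
      ext m
      simp [Fin.le_def]
    rw [he, Fin.card_Ici]

/-- For an upward-closed predicate on `Fin n`, having at least `n+1-y` elements is
the same as containing `y-1`. -/
lemma upper_card_iff {N : ℕ} (p : Fin N → Prop) [DecidablePred p]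
    (hp : ∀ m m' : Fin N, m ≤ m' → p m → p m') {y : ℕ} (h1 : 1 ≤ y) (h2 : y ≤ N) :
    (N + 1 - y ≤ (Finset.univ.filter fun m => p m).card) ↔ p ⟨y - 1, by omega⟩ := by
  constructor
  · intro hcard
    by_contra hnp
    have hsub : (Finset.univ.filter fun m => p m) ⊆
        (Finset.univ.filter fun m : Fin N => (y : ℕ) ≤ (m : ℕ)) := by
      intro m hm
      simp only [Finset.mem_filter, Finset.mem_univ, true_and] at hm ⊢
      by_contra hmy
      exact hnp (hp m ⟨y - 1, by omega⟩ (by simp [Fin.le_def]; omega) hm)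
    have := Finset.card_le_card hsub
    rw [card_ge] at this
    omega
  · intro hpm
    have hsub : (Finset.univ.filter fun m : Fin N => (y - 1 : ℕ) ≤ (m : ℕ)) ⊆
        (Finset.univ.filter fun m => p m) := by
      intro m hm
      simp only [Finset.mem_filter, Finset.mem_univ, true_and] at hm ⊢
      exact hp ⟨y - 1, by omega⟩ m (by simp [Fin.le_def]; omega) hpm
    have := Finset.card_le_card hsub
    rw [card_ge] at this
    omega

variable (k n r) in
/-- From a tableau to a path system. -/
def Phi (A : Fin r → Fin k → Fin (n + 1)) : Fin r → Fin n → Fin (k + r) :=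
  fun s m => ⟨(s : ℕ) + (Finset.univ.filter
      fun i : Fin k => n + 1 ≤ (A s i : ℕ) + (m : ℕ) + 1).card, by
    have h1 : (Finset.univ.filter
        fun i : Fin k => n + 1 ≤ (A s i : ℕ) + (m : ℕ) + 1).card ≤ k := by
      simpa using Finset.card_filter_le Finset.univ
        (fun i : Fin k => n + 1 ≤ (A s i : ℕ) + (m : ℕ) + 1)
    have := s.2
    omega⟩

variable (k n r) in
/-- From a path system to a tableau. -/
def Psi (V : Fin r → Fin n → Fin (k + r)) : Fin r → Fin k → Fin (n + 1) :=
  fun s i => ⟨(Finset.univ.filter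
      fun m : Fin n => (s : ℕ) + (k - (i : ℕ)) ≤ (V s m : ℕ)).card, by
    have h1 : (Finset.univ.filter
        fun m : Fin n => (s : ℕ) + (k - (i : ℕ)) ≤ (V s m : ℕ)).card ≤ n := by
      simpa using Finset.card_filter_le Finset.univ
        (fun m : Fin n => (s : ℕ) + (k - (i : ℕ)) ≤ (V s m : ℕ))
    omega⟩

lemma XX_Phi (A : Fin r → Fin k → Fin (n + 1)) (s : Fin r) (y : ℕ) :
    XX k n r 1 (Phi k n r A) s y =
      (s : ℕ) + (Finset.univ.filter fun i : Fin k => n + 1 ≤ (A s i : ℕ) + y).card := by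
  unfold XX
  rcases Nat.eq_zero_or_pos y with rfl | hy0
  · rw [Xr_zero]
    rw [Finset.filter_false_of_mem (fun i _ => by have := (A s i).2; omega)]
    simp
  · rcases le_or_gt y n with hyn | hyn
    · rw [Xr_mid _ _ _ _ hy0 hyn]
      show (s : ℕ) + (Finset.univ.filter
          fun i : Fin k => n + 1 ≤ (A s i : ℕ) + (y - 1) + 1).card = _
      congr 2
      ext i
      simp only [Finset.mem_filter]
      constructor
      · rintro ⟨hu, hi⟩; exact ⟨hu, by omega⟩
      · rintro ⟨hu, hi⟩; exact ⟨hu, by omega⟩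
    · rw [Xr_big _ _ _ _ (by omega)]
      rw [Finset.filter_true_of_mem (fun i _ => by have := (A s i).2; omega)]
      simp only [Equiv.Perm.coe_one, id_eq, Finset.card_univ, Fintype.card_fin]
      omega

lemma ok_Phi {A : Fin r → Fin k → Fin (n + 1)} (hA : ∀ s, Monotone (A s)) :
    Ok k n r 1 (Phi k n r A) := by
  intro s
  have hfe : XX k n r 1 (Phi k n r A) s = fun y =>
      (s : ℕ) + (Finset.univ.filter fun i : Fin k => n + 1 ≤ (A s i : ℕ) + y).card :=
    funext (XX_Phi A s)
  rw [hfe]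
  intro y y' hyy
  simp only
  have : (Finset.univ.filter fun i : Fin k => n + 1 ≤ (A s i : ℕ) + y) ⊆
      (Finset.univ.filter fun i : Fin k => n + 1 ≤ (A s i : ℕ) + y') := by
    intro i hi
    simp only [Finset.mem_filter, Finset.mem_univ, true_and] at hi ⊢
    omega
  have := Finset.card_le_card this
  omega

lemma sep_Phi {A : Fin r → Fin k → Fin (n + 1)}
    (hcol : ∀ (s t : Fin r) (i : Fin k), s < t → A s i < A t i) :
    Sep k n r 1 (Phi k n r A) := by
  intro s t hst y hy
  rw [XX_Phi, XX_Phi]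
  have hsub : (Finset.univ.filter fun i : Fin k => n + 1 ≤ (A s i : ℕ) + (y + 1)) ⊆
      (Finset.univ.filter fun i : Fin k => n + 1 ≤ (A t i : ℕ) + y) := by
    intro i hi
    simp only [Finset.mem_filter, Finset.mem_univ, true_and] at hi ⊢
    have := hcol s t i hst
    simp only [Fin.lt_def] at this
    omega
  have := Finset.card_le_card hsub
  have := Fin.lt_def.1 hst
  omega

lemma psi_phi {A : Fin r → Fin k → Fin (n + 1)} (hA : ∀ s, Monotone (A s)) :
    Psi k n r (Phi k n r A) = A := by
  funext s i
  apply Fin.ext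
  show (Finset.univ.filter fun m : Fin n =>
      (s : ℕ) + (k - (i : ℕ)) ≤ ((Phi k n r A) s m : ℕ)).card = (A s i : ℕ)
  have key : ∀ m : Fin n, ((s : ℕ) + (k - (i : ℕ)) ≤ ((Phi k n r A) s m : ℕ)) ↔
      (n + 1 ≤ (A s i : ℕ) + (m : ℕ) + 1) := by
    intro m
    show (s : ℕ) + (k - (i : ℕ)) ≤ (s : ℕ) + (Finset.univ.filter
        fun j : Fin k => n + 1 ≤ (A s j : ℕ) + (m : ℕ) + 1).card ↔ _
    constructor
    · intro hle
      by_contra hni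
      have hsub : (Finset.univ.filter fun j : Fin k => n + 1 ≤ (A s j : ℕ) + (m : ℕ) + 1) ⊆
          (Finset.univ.filter fun j : Fin k => (i : ℕ) + 1 ≤ (j : ℕ)) := by
        intro j hj
        simp only [Finset.mem_filter, Finset.mem_univ, true_and] at hj ⊢
        by_contra hji
        have := hA s (show j ≤ i from Fin.le_def.2 (by omega))
        simp only [Fin.le_def] at this
        omega
      have := Finset.card_le_card hsub
      rw [card_ge] at this
      have := i.2
      omega
    · intro hle
      have hsub : (Finset.univ.filter fun j : Fin k => (i : ℕ) ≤ (j : ℕ)) ⊆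
          (Finset.univ.filter fun j : Fin k => n + 1 ≤ (A s j : ℕ) + (m : ℕ) + 1) := by
        intro j hj
        simp only [Finset.mem_filter, Finset.mem_univ, true_and] at hj ⊢
        have := hA s (show i ≤ j from Fin.le_def.2 (by omega))
        simp only [Fin.le_def] at this
        omega
      have := Finset.card_le_card hsub
      rw [card_ge] at this
      omega
  rw [Finset.filter_congr (fun m _ => by rw [key m])]
  have he : (Finset.univ.filter fun m : Fin n => n + 1 ≤ (A s i : ℕ) + (m : ℕ) + 1) =
      (Finset.univ.filter fun m : Fin n => n - (A s i : ℕ) ≤ (m : ℕ)) := by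
    ext m
    have := (A s i).2
    simp only [Finset.mem_filter, Finset.mem_univ, true_and]
    omega
  rw [he, card_ge]
  have := (A s i).2
  omega

lemma V_bounds {V : Fin r → Fin n → Fin (k + r)} (hok : Ok k n r 1 V) (s : Fin r) :
    Monotone (V s) ∧ ∀ m : Fin n, (s : ℕ) ≤ (V s m : ℕ) ∧ (V s m : ℕ) ≤ k + (s : ℕ) := by
  have h' : Monotone (Xr n (s : ℕ) (k + (((1 : Equiv.Perm (Fin r)) s) : ℕ)) (V s)) := hok s
  simp only [Equiv.Perm.coe_one, id_eq] at h'
  have := (monotone_Xr_iff n (s : ℕ) (k + (s : ℕ)) (V s)).1 h'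
  exact ⟨this.1, this.2.1⟩

lemma phi_psi {V : Fin r → Fin n → Fin (k + r)} (hok : Ok k n r 1 V) :
    Phi k n r (Psi k n r V) = V := by
  funext s m
  apply Fin.ext
  show (s : ℕ) + (Finset.univ.filter
      fun i : Fin k => n + 1 ≤ ((Psi k n r V) s i : ℕ) + (m : ℕ) + 1).card = (V s m : ℕ)
  obtain ⟨hmono, hb⟩ := V_bounds hok s
  have key : ∀ i : Fin k, (n + 1 ≤ ((Psi k n r V) s i : ℕ) + (m : ℕ) + 1) ↔
      ((s : ℕ) + (k - (i : ℕ)) ≤ (V s m : ℕ)) := by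
    intro i
    show (n + 1 ≤ (Finset.univ.filter
        fun m' : Fin n => (s : ℕ) + (k - (i : ℕ)) ≤ (V s m' : ℕ)).card + (m : ℕ) + 1) ↔ _
    have hup := upper_card_iff (fun m' : Fin n => (s : ℕ) + (k - (i : ℕ)) ≤ (V s m' : ℕ))
      (fun m1 m2 h12 hp => le_trans hp (by
        have := hmono h12
        simp only [Fin.le_def] at this
        omega))
      (show 1 ≤ (m : ℕ) + 1 by omega) (show (m : ℕ) + 1 ≤ n from m.2)
    have hfm : (⟨(m : ℕ) + 1 - 1, by have := m.2; omega⟩ : Fin n) = m := Fin.ext (by simp)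
    rw [hfm] at hup
    constructor
    · intro hle
      exact hup.1 (by omega)
    · intro hle
      have := hup.2 hle
      omega
  rw [Finset.filter_congr (fun i _ => by rw [key i])]
  have hb' := hb m
  have he : (Finset.univ.filter fun i : Fin k => (s : ℕ) + (k - (i : ℕ)) ≤ (V s m : ℕ)) =
      (Finset.univ.filter fun i : Fin k => k - ((V s m : ℕ) - (s : ℕ)) ≤ (i : ℕ)) := by
    ext i
    simp only [Finset.mem_filter, Finset.mem_univ, true_and]
    have := i.2
    omega
  rw [he, card_ge]
  omega

lemma rows_Psi {V : Fin r → Fin n → Fin (k + r)} (hok : Ok k n r 1 V) (s : Fin r) :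
    Monotone (Psi k n r V s) := by
  intro i j hij
  simp only [Psi, Fin.le_def]
  apply Finset.card_le_card
  intro m hm
  simp only [Finset.mem_filter, Finset.mem_univ, true_and] at hm ⊢
  simp only [Fin.le_def] at hij
  omega

lemma cols_Psi_consec {V : Fin r → Fin n → Fin (k + r)} (hok : Ok k n r 1 V)
    (hsep : Sep k n r 1 V) (u : ℕ) (hu1 : u + 1 < r) (i : Fin k) :
    Psi k n r V ⟨u, by omega⟩ i < Psi k n r V ⟨u + 1, hu1⟩ i := by
  set s : Fin r := ⟨u, by omega⟩ with hs
  set t : Fin r := ⟨u + 1, hu1⟩ with ht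
  by_contra hcon
  push_neg at hcon
  set B := Psi k n r V with hB
  have hXf : ∀ (w : Fin r) (y : ℕ), XX k n r 1 V w y =
      (w : ℕ) + (Finset.univ.filter fun j : Fin k => n + 1 ≤ (B w j : ℕ) + y).card := by
    intro w y
    conv_lhs => rw [← phi_psi hok]
    exact XX_Phi (Psi k n r V) w y
  set a := (B s i : ℕ) with ha
  have han : a ≤ n := by have := (B s i).2; omega
  have hsep' := hsep s t (by simp [hs, ht, Fin.lt_def]) (n - a) (by omega)
  rw [hXf, hXf] at hsep'
  have hcs : k - (i : ℕ) ≤ (Finset.univ.filter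
      fun j : Fin k => n + 1 ≤ (B s j : ℕ) + (n - a + 1)).card := by
    have hsub : (Finset.univ.filter fun j : Fin k => (i : ℕ) ≤ (j : ℕ)) ⊆
        (Finset.univ.filter fun j : Fin k => n + 1 ≤ (B s j : ℕ) + (n - a + 1)) := by
      intro j hj
      simp only [Finset.mem_filter, Finset.mem_univ, true_and] at hj ⊢
      have := rows_Psi hok s (show i ≤ j from Fin.le_def.2 hj)
      simp only [Fin.le_def, ← hB] at this
      omega
    have := Finset.card_le_card hsub
    rw [card_ge] at this
    omega
  have hct : (Finset.univ.filter
      fun j : Fin k => n + 1 ≤ (B t j : ℕ) + (n - a)).card ≤ k - ((i : ℕ) + 1) := by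
    have hsub : (Finset.univ.filter fun j : Fin k => n + 1 ≤ (B t j : ℕ) + (n - a)) ⊆
        (Finset.univ.filter fun j : Fin k => (i : ℕ) + 1 ≤ (j : ℕ)) := by
      intro j hj
      simp only [Finset.mem_filter, Finset.mem_univ, true_and] at hj ⊢
      by_contra hji
      have := rows_Psi hok t (show j ≤ i from Fin.le_def.2 (by omega))
      simp only [Fin.le_def, ← hB] at this
      omega
    have := Finset.card_le_card hsub
    rw [card_ge] at this
    omega
  have hik := i.2
  have e1 : (s : ℕ) = u := rfl
  have e2 : (t : ℕ) = u + 1 := rfl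
  omega

lemma cols_Psi {V : Fin r → Fin n → Fin (k + r)} (hok : Ok k n r 1 V)
    (hsep : Sep k n r 1 V) (s t : Fin r) (i : Fin k) (hst : s < t) :
    Psi k n r V s i < Psi k n r V t i := by
  have key : ∀ d : ℕ, 0 < d → ∀ (u : ℕ) (hd : u + d < r),
      Psi k n r V ⟨u, by omega⟩ i < Psi k n r V ⟨u + d, hd⟩ i := by
    intro d
    induction d with
    | zero => omega
    | succ d ih =>
      intro _ u hd
      rcases Nat.eq_zero_or_pos d with rfl | hd0
      · exact cols_Psi_consec hok hsep u (by omega) i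
      · calc Psi k n r V ⟨u, by omega⟩ i < Psi k n r V ⟨u + d, by omega⟩ i :=
            ih hd0 u (by omega)
        _ < Psi k n r V ⟨u + d + 1, by omega⟩ i :=
            cols_Psi_consec hok hsep (u + d) (by omega) i
  have hst' := Fin.lt_def.1 hst
  have h1 : s = (⟨(s : ℕ), s.2⟩ : Fin r) := Fin.ext rfl
  have h2 : t = (⟨(s : ℕ) + ((t : ℕ) - (s : ℕ)), by have := t.2; omega⟩ : Fin r) :=
    Fin.ext (by simp; omega)
  rw [h1, h2]
  exact key _ (by omega) _ _

/-- The bijection between tableaux and separated identity-permutation systems. -/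
noncomputable def bijTV :
    {A : Fin r → Fin k → Fin (n + 1) //
        (∀ s, Monotone (A s)) ∧
          ∀ (s t : Fin r) (i : Fin k), s < t → A s i < A t i} ≃
      {V : Fin r → Fin n → Fin (k + r) // Ok k n r 1 V ∧ Sep k n r 1 V} where
  toFun A := ⟨Phi k n r A.1, ok_Phi A.2.1, sep_Phi A.2.2⟩
  invFun V := ⟨Psi k n r V.1, fun s => rows_Psi V.2.1 s,
    fun s t i hst => cols_Psi V.2.1 V.2.2 s t i hst⟩
  left_inv A := Subtype.ext (psi_phi A.2.1)
  right_inv V := Subtype.ext (phi_psi V.2.1)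

end Bij

end S13


/-- The number of families of `r` mutually non-crossing north-east lattice paths
(equivalently, semistandard tableaux of rectangular shape `k^r` with entries in
`{0,…,n}`), encoded as `A : Fin r → Fin k → Fin (n+1)` with weakly increasing
rows and strictly increasing columns, equals the `r×r` Lindström–Gessel–Viennot
determinant with entries `C(n+k+j−i, k+j−i)` (and `0` when `k+j < i`). -/
theorem stmt13 (k n r : ℕ) (hk : 1 ≤ k) (hn : 1 ≤ n) (hr : 1 ≤ r) :
    (Nat.card {A : Fin r → Fin k → Fin (n + 1) //
        (∀ s, Monotone (A s)) ∧
          ∀ (s t : Fin r) (i : Fin k), s < t → A s i < A t i} : ℤ) =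
      Matrix.det (Matrix.of fun i j : Fin r =>
        if (i : ℕ) ≤ k + (j : ℕ) then
          (Nat.choose (n + k + (j : ℕ) - (i : ℕ)) (k + (j : ℕ) - (i : ℕ)) : ℤ)
        else 0) := by
  classical
  -- Step 1: expand the determinant
  have step1 : Matrix.det (Matrix.of fun i j : Fin r =>
      if (i : ℕ) ≤ k + (j : ℕ) then
        (Nat.choose (n + k + (j : ℕ) - (i : ℕ)) (k + (j : ℕ) - (i : ℕ)) : ℤ)
      else 0) =
      ∑ σ : Equiv.Perm (Fin r), (Equiv.Perm.sign σ : ℤ) *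
        ((Nat.card {V : Fin r → Fin n → Fin (k + r) // S13.Ok k n r σ V} : ℕ) : ℤ) := by
    rw [← Matrix.det_transpose, Matrix.det_apply]
    refine Finset.sum_congr rfl fun σ _ => ?_
    rw [S13.card_ok σ]
    push_cast
    rw [Units.smul_def, zsmul_eq_mul]
    congr 1
    refine Finset.prod_congr rfl fun s _ => ?_
    simp only [Matrix.transpose_apply, Matrix.of_apply]
    by_cases hs : (s : ℕ) ≤ k + ((σ s : Fin r) : ℕ)
    · rw [if_pos hs, if_pos hs]
      congr 2 <;> omega
    · rw [if_neg hs, if_neg hs]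
  rw [step1]
  -- Step 2: the signed sum as a sum over valid systems
  have step2 : ∑ σ : Equiv.Perm (Fin r), (Equiv.Perm.sign σ : ℤ) *
      ((Nat.card {V : Fin r → Fin n → Fin (k + r) // S13.Ok k n r σ V} : ℕ) : ℤ) =
      ∑ p ∈ (Finset.univ.filter
          fun p : Equiv.Perm (Fin r) × (Fin r → Fin n → Fin (k + r)) =>
            S13.Ok k n r p.1 p.2),
        (Equiv.Perm.sign p.1 : ℤ) := by
    rw [Finset.sum_filter, ← Finset.univ_product_univ, Finset.sum_product]
    refine Finset.sum_congr rfl fun σ _ => ?_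
    rw [Nat.card_eq_fintype_card, Fintype.card_subtype, ← Finset.sum_filter]
    rw [Finset.sum_congr rfl (g := fun _ => ((Equiv.Perm.sign σ : ℤ))) (fun x hx => rfl),
      Finset.sum_const, nsmul_eq_mul, mul_comm]
  rw [step2]
  -- Step 3: split into crossing and non-crossing systems
  rw [← Finset.sum_filter_add_sum_filter_not _ (fun p : Equiv.Perm (Fin r) ×
      (Fin r → Fin n → Fin (k + r)) => S13.Cross k n r p.1 p.2)]
  -- Step 4: crossing systems cancel
  have step4 : ∑ p ∈ (Finset.univ.filter
      fun p : Equiv.Perm (Fin r) × (Fin r → Fin n → Fin (k + r)) =>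
        S13.Ok k n r p.1 p.2).filter (fun p => S13.Cross k n r p.1 p.2),
        (Equiv.Perm.sign p.1 : ℤ) = 0 := by
    refine Finset.sum_involution
      (fun p hp => (S13.nσ (Finset.mem_filter.1 (Finset.mem_filter.1 hp).1).2
          (Finset.mem_filter.1 hp).2,
        S13.nV (Finset.mem_filter.1 (Finset.mem_filter.1 hp).1).2
          (Finset.mem_filter.1 hp).2))
      (fun p hp => ?_) (fun p hp _ => ?_) (fun p hp => ?_) (fun p hp => ?_)
    · have := S13.sign_nσ (Finset.mem_filter.1 (Finset.mem_filter.1 hp).1).2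
        (Finset.mem_filter.1 hp).2
      simp only [this]
      push_cast
      ring
    · intro he
      exact S13.nσ_ne (Finset.mem_filter.1 (Finset.mem_filter.1 hp).1).2
        (Finset.mem_filter.1 hp).2 (congrArg Prod.fst he)
    · rw [Finset.mem_filter, Finset.mem_filter]
      exact ⟨⟨Finset.mem_univ _, S13.ok' _ _⟩, S13.cross' _ _⟩
    · exact Prod.ext
        (S13.nσ_invol (Finset.mem_filter.1 (Finset.mem_filter.1 hp).1).2
          (Finset.mem_filter.1 hp).2)
        (S13.nV_invol (Finset.mem_filter.1 (Finset.mem_filter.1 hp).1).2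
          (Finset.mem_filter.1 hp).2)
  rw [step4, zero_add]
  -- Step 5: non-crossing systems are identity systems; count them by tableaux
  have hset : (Finset.univ.filter
      fun p : Equiv.Perm (Fin r) × (Fin r → Fin n → Fin (k + r)) =>
        S13.Ok k n r p.1 p.2).filter (fun p => ¬ S13.Cross k n r p.1 p.2) =
      Finset.univ.filter (fun p : Equiv.Perm (Fin r) × (Fin r → Fin n → Fin (k + r)) =>
        p.1 = 1 ∧ S13.Ok k n r 1 p.2 ∧ S13.Sep k n r 1 p.2) := by
    ext p
    simp only [Finset.mem_filter, Finset.mem_univ, true_and]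
    constructor
    · rintro ⟨hok, hnc⟩
      have h1 := S13.perm_eq_one_of_noncross hok hnc
      have h2 := S13.sep_of_noncross hok hnc
      rw [h1] at hok h2
      exact ⟨h1, hok, h2⟩
    · rintro ⟨h1, hok, hsep⟩
      rw [h1]
      exact ⟨hok, S13.noncross_of_sep hok hsep⟩
  rw [hset]
  have step5 : ∑ p ∈ Finset.univ.filter
      (fun p : Equiv.Perm (Fin r) × (Fin r → Fin n → Fin (k + r)) =>
        p.1 = 1 ∧ S13.Ok k n r 1 p.2 ∧ S13.Sep k n r 1 p.2),
      (Equiv.Perm.sign p.1 : ℤ) =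
      ((Finset.univ.filter (fun V : Fin r → Fin n → Fin (k + r) =>
        S13.Ok k n r 1 V ∧ S13.Sep k n r 1 V)).card : ℤ) := by
    rw [Finset.sum_congr rfl (g := fun _ => (1 : ℤ)) (fun p hp => by
      rw [(Finset.mem_filter.1 hp).2.1]
      simp)]
    rw [Finset.sum_const, nsmul_eq_mul, mul_one]
    congr 1
    refine Finset.card_nbij' (fun p => p.2) (fun V => (1, V)) ?_ ?_ ?_ ?_
    · intro p hp
      simp only [Finset.mem_coe, Finset.mem_filter, Finset.mem_univ, true_and] at hp ⊢
      exact hp.2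
    · intro V hV
      simp only [Finset.mem_coe, Finset.mem_filter, Finset.mem_univ, true_and] at hV ⊢
      exact hV
    · intro p hp
      simp only [Finset.mem_coe, Finset.mem_filter, Finset.mem_univ, true_and] at hp
      simp [Prod.ext_iff, hp.1.symm]
    · intro V hV
      rfl
  rw [step5]
  congr 1
  rw [Nat.card_congr S13.bijTV]
  rw [Nat.card_eq_fintype_card, Fintype.card_subtype]
end
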